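/- arXiv:2310.01910 — 2 statements merged into one kernel-verified Lean document; each statement's English description precedes it below -/
import Mathlib

section
/- Let K and K' be nontrivial positive and multiplicatively cancellative commutative semirings, V a finite schema of variables with finite nonempty domains, and Σ ∪ {τ} a set of saturated conditional independencies and functional dependencies over V. Then Σ implies τ over K-relations if and only if Σ implies τ over K'-relations. -/
/-! # Preliminaries: K-relations over semirings -/

open Finset

variable {V : Type*}

/-- A tuple over the finite set `X` of variables: it assigns to each variable
`a ∈ X` a value in its domain `Dom a`. -/
abbrev Tup (Dom : V → Type*) (X : Finset V) : Type _ :=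
  ∀ a : X, Dom a

/-- Restriction `t[Y]` of a tuple `t` over `X` to a subset `Y ⊆ X`. -/
def Tup.restrict {Dom : V → Type*} {X Y : Finset V} (h : Y ⊆ X) (t : Tup Dom X) :
    Tup Dom Y :=
  fun a => t ⟨a.1, h a.2⟩

open Classical in
/-- The marginal of a `K`-relation `R` over a schema `X` on a subset `Y ⊆ X`,
evaluated at a tuple `u` over `Y`: the sum of `R t` over all tuples `t` over `X`
with `t[Y] = u`. -/
noncomputable def margin {K : Type*} [CommSemiring K] [DecidableEq V]
    {Dom : V → Type*} [∀ a, Fintype (Dom a)] {X Y : Finset V}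
    (R : Tup Dom X → K) (h : Y ⊆ X) (u : Tup Dom Y) : K :=
  ∑ t : Tup Dom X, if Tup.restrict h t = u then R t else 0

open Classical in
/-- `c_S(u)`: the product of the marginal `S[Z]` over all tuples `v` in the
support of `S[Z]` different from `u` (empty products are `1`). -/
noncomputable def cfun {K : Type*} [CommSemiring K] [DecidableEq V]
    {Dom : V → Type*} [∀ a, Fintype (Dom a)] {Y Z : Finset V}
    (S : Tup Dom Y → K) (h : Z ⊆ Y) (u : Tup Dom Z) : K :=
  ∏ v : Tup Dom Z, if margin S h v ≠ 0 ∧ v ≠ u then margin S h v else 1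

/-- The join `R ⋈ S` of a `K`-relation `R` over `X` and a `K`-relation `S` over `Y`,
realized on the schema `T = X ∪ Y`:
`(R ⋈ S)(t) = R(t[X]) ⬝ S(t[Y]) ⬝ c_S(t[X ∩ Y])`. -/
noncomputable def joinOn {K : Type*} [CommSemiring K] [DecidableEq V]
    {Dom : V → Type*} [∀ a, Fintype (Dom a)] {X Y T : Finset V}
    (R : Tup Dom X → K) (S : Tup Dom Y → K)
    (hX : X ⊆ T) (hY : Y ⊆ T) (_hT : T ⊆ X ∪ Y) : Tup Dom T → K :=
  fun t =>
    R (Tup.restrict hX t) * S (Tup.restrict hY t) *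
      cfun (Z := X ∩ Y) S Finset.inter_subset_right
        (Tup.restrict ((Finset.inter_subset_right (s₁ := X)).trans hY) t)

/-- A `K`-relation `R` over the schema `S` satisfies the conditional independence
`CI(X; Y, Z)` (for `X, Y, Z ⊆ S`) if for every tuple `t` over `X ∪ Y ∪ Z`,
`R(t[X∪Y]) ⬝ R(t[X∪Z]) = R(t[X∪Y∪Z]) ⬝ R(t[X])`, all values being marginals of `R`. -/
def satCI {K : Type*} [CommSemiring K] [DecidableEq V]
    {Dom : V → Type*} [∀ a, Fintype (Dom a)] {S X Y Z : Finset V}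
    (R : Tup Dom S → K) (hX : X ⊆ S) (hY : Y ⊆ S) (hZ : Z ⊆ S) : Prop :=
  ∀ t : Tup Dom (X ∪ Y ∪ Z),
    margin R (Finset.union_subset hX hY) (Tup.restrict Finset.subset_union_left t) *
      margin R (Finset.union_subset hX hZ)
        (Tup.restrict (Finset.union_subset
          (Finset.subset_union_left.trans Finset.subset_union_left)
          Finset.subset_union_right) t) =
    margin R (Finset.union_subset (Finset.union_subset hX hY) hZ) t *
      margin R hX
        (Tup.restrict (Finset.subset_union_left.trans Finset.subset_union_left) t)

/-- A `K`-relation `R` over the schema `S` satisfies the functional dependency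
`U → W` if any two tuples in the support of `R` agreeing on `U` agree on `W`. -/
def satFD {K : Type*} [Zero K] {Dom : V → Type*} {S U W : Finset V}
    (R : Tup Dom S → K) (hU : U ⊆ S) (hW : W ⊆ S) : Prop :=
  ∀ t t' : Tup Dom S, R t ≠ 0 → R t' ≠ 0 →
    Tup.restrict hU t = Tup.restrict hU t' → Tup.restrict hW t = Tup.restrict hW t'

/-- Two `K`-relations over the same schema are equivalent (up to normalization),
`R ≡ R'`, if `aR = bR'` for some nonzero `a, b ∈ K`. -/
def equivRel {K : Type*} [CommSemiring K] {Dom : V → Type*} {X : Finset V}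
    (R R' : Tup Dom X → K) : Prop :=
  ∃ a b : K, a ≠ 0 ∧ b ≠ 0 ∧ ∀ t, a * R t = b * R' t

/-- `K` is `⊕`-positive: `a + b = 0` implies `a = b = 0`. -/
def plusPos (K : Type*) [CommSemiring K] : Prop :=
  ∀ a b : K, a + b = 0 → a = 0 ∧ b = 0

/-- `K` has no divisors of zero. -/
def noZD (K : Type*) [CommSemiring K] : Prop :=
  ∀ a b : K, a * b = 0 → a = 0 ∨ b = 0

/-- `K` is positive: `⊕`-positive and without zero divisors. -/
def posSemiring (K : Type*) [CommSemiring K] : Prop :=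
  plusPos K ∧ noZD K

/-- `K` is multiplicatively cancellative. -/
def mulCanc (K : Type*) [CommSemiring K] : Prop :=
  ∀ a b c : K, a ≠ 0 → a * b = a * c → b = c

/-- `K` is additively cancellative. -/
def addCanc (K : Type*) [CommSemiring K] : Prop :=
  ∀ a b c : K, a + b = a + c → b = c

/-- `K` is naturally totally ordered: the preorder `a ≤ b ↔ ∃ c, a + c = b`
is antisymmetric and total. -/
def natTotOrd (K : Type*) [CommSemiring K] : Prop :=
  (∀ a b : K, (∃ c, a + c = b) → (∃ c, b + c = a) → a = b) ∧
    (∀ a b : K, (∃ c, a + c = b) ∨ (∃ c, b + c = a))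

/-- `K` is a semifield: every nonzero element has a multiplicative inverse. -/
def isSemifield (K : Type*) [CommSemiring K] : Prop :=
  ∀ a : K, a ≠ 0 → ∃ b, a * b = 1

theorem subL [DecidableEq V] {X Y Z : Finset V} : X ⊆ X ∪ Y ∪ Z :=
  Finset.subset_union_left.trans Finset.subset_union_left

theorem subM [DecidableEq V] {X Y Z : Finset V} : Y ⊆ X ∪ Y ∪ Z :=
  Finset.subset_union_right.trans Finset.subset_union_left

theorem subR [DecidableEq V] {X Y Z : Finset V} : Z ⊆ X ∪ Y ∪ Z :=
  Finset.subset_union_right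

theorem subXY [DecidableEq V] {X Y Z : Finset V} : X ∪ Y ⊆ X ∪ Y ∪ Z :=
  Finset.subset_union_left

theorem subXZ [DecidableEq V] {X Y Z : Finset V} : X ∪ Z ⊆ X ∪ Y ∪ Z :=
  Finset.union_subset subL subR

theorem unionSplit [DecidableEq V] {X Y Z : Finset V} :
    X ∪ Y ∪ Z ⊆ (X ∪ Y) ∪ (X ∪ Z) := by
  intro a ha
  simp only [Finset.mem_union] at ha ⊢
  tauto

/-- The two-element Boolean semiring `𝔹 = ({0,1}, ∨, ∧, 0, 1)`. -/
def B2 : Type := Bool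

instance : DecidableEq B2 := inferInstanceAs (DecidableEq Bool)
instance : Fintype B2 := inferInstanceAs (Fintype Bool)

instance : CommSemiring B2 where
  add a b := Bool.or a b
  zero := Bool.false
  add_assoc := by decide
  zero_add := by decide
  add_zero := by decide
  add_comm := by decide
  mul a b := Bool.and a b
  one := Bool.true
  mul_assoc := by decide
  one_mul := by decide
  mul_one := by decide
  zero_mul := by decide
  mul_zero := by decide
  left_distrib := by decide
  right_distrib := by decide
  mul_comm := by decide
  nsmul n b := match n with | 0 => Bool.false | _ + 1 => b
  nsmul_zero := fun _ => rfl
  nsmul_succ := fun n x => match n with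
    | 0 => rfl
    | _ + 1 => (Bool.or_self x).symm

instance : Nontrivial B2 := ⟨0, 1, by decide⟩

/-- Constraints over the schema `V`: conditional independencies `CI(X; Y, Z)` and
functional dependencies `U → W`. -/
inductive Constraint (V : Type*) : Type _ where
  | ci (X Y Z : Finset V) : Constraint V
  | fd (U W : Finset V) : Constraint V

/-- Satisfaction of a constraint by a `K`-relation over the full schema `V`. -/
def Constraint.SatBy [DecidableEq V] [Fintype V] {Dom : V → Type*}
    [∀ a, Fintype (Dom a)] {K : Type*} [CommSemiring K]
    (σ : Constraint V) (R : Tup Dom (Finset.univ : Finset V) → K) : Prop :=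
  match σ with
  | .ci X Y Z =>
      satCI R (Finset.subset_univ X) (Finset.subset_univ Y) (Finset.subset_univ Z)
  | .fd U W => satFD R (Finset.subset_univ U) (Finset.subset_univ W)

/-- A constraint is a saturated CI (pairwise disjoint components covering the
schema) or a functional dependency. -/
def Constraint.SCIorFD [DecidableEq V] [Fintype V] : Constraint V → Prop
  | .ci X Y Z => Disjoint X Y ∧ Disjoint X Z ∧ Disjoint Y Z ∧ X ∪ Y ∪ Z = Finset.univ
  | .fd _ _ => True

/-- `Σ` implies `τ` over `K`-relations (with nonempty support) over the full schema `V`. -/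
def impliesOver [DecidableEq V] [Fintype V] (Dom : V → Type*) [∀ a, Fintype (Dom a)]
    (K : Type*) [CommSemiring K] (Sig : Set (Constraint V)) (τ : Constraint V) : Prop :=
  ∀ R : Tup Dom (Finset.univ : Finset V) → K, (∃ t, R t ≠ 0) →
    (∀ σ ∈ Sig, σ.SatBy R) → τ.SatBy R


/-! ### Auxiliary development -/

section Aux
set_option linter.unusedSectionVars false

variable {K : Type*} [CommSemiring K] [DecidableEq V] [Fintype V]
variable {Dom : V → Type*} [∀ a, Fintype (Dom a)]

/-- Evaluation of a full tuple at a variable. -/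
def ev (t : Tup Dom (Finset.univ : Finset V)) (v : V) : Dom v :=
  t ⟨v, Finset.mem_univ v⟩

/-- Mixed tuple: agrees with `s` on `W` and with `t` elsewhere. -/
def mixOn (W : Finset V) (t s : Tup Dom (Finset.univ : Finset V)) :
    Tup Dom (Finset.univ : Finset V) :=
  fun a => if a.1 ∈ W then s a else t a

/-- Agreement of two full tuples on a set of variables. -/
def agreeOn (A : Finset V) (t s : Tup Dom (Finset.univ : Finset V)) : Prop :=
  ∀ v ∈ A, ev t v = ev s v

lemma ev_mixOn (W : Finset V) (t s : Tup Dom (Finset.univ : Finset V)) (v : V) :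
    ev (mixOn W t s) v = if v ∈ W then ev s v else ev t v := rfl

lemma tup_ext {t s : Tup Dom (Finset.univ : Finset V)} (h : ∀ v, ev t v = ev s v) :
    t = s := by
  funext a
  have := h a.1
  simpa [ev] using this

lemma restrict_eq_iff {A : Finset V} (h : A ⊆ Finset.univ)
    {t s : Tup Dom (Finset.univ : Finset V)} :
    Tup.restrict h t = Tup.restrict h s ↔ agreeOn A t s := by
  constructor
  · intro he v hv
    have := congrFun he ⟨v, hv⟩
    simpa [Tup.restrict, ev] using this
  · intro ha
    funext a
    have := ha a.1 a.2
    simpa [Tup.restrict, ev] using this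

lemma restrict_restrict {A B C : Finset V} (h1 : A ⊆ B) (h2 : B ⊆ C) (h3 : A ⊆ C)
    (w : Tup Dom C) :
    Tup.restrict h1 (Tup.restrict h2 w) = Tup.restrict h3 w := rfl

/-- Marginal of `R` on `A`, evaluated at (the restriction of) a full tuple `w`. -/
noncomputable def mrg (R : Tup Dom (Finset.univ : Finset V) → K) (A : Finset V)
    (w : Tup Dom (Finset.univ : Finset V)) : K :=
  margin R (Finset.subset_univ A) (Tup.restrict (Finset.subset_univ A) w)

lemma sum_ne_zero_of_mem (hpos : plusPos K) {ι : Type*} {s : Finset ι} {f : ι → K}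
    {a : ι} (ha : a ∈ s) (hfa : f a ≠ 0) : ∑ x ∈ s, f x ≠ 0 := by
  classical
  intro h0
  rw [← Finset.add_sum_erase s f ha] at h0
  exact hfa (hpos _ _ h0).1

lemma mrg_ne_zero (hpos : plusPos K) {R : Tup Dom (Finset.univ : Finset V) → K}
    {A : Finset V} {w : Tup Dom (Finset.univ : Finset V)} (hw : R w ≠ 0) :
    mrg R A w ≠ 0 := by
  classical
  unfold mrg margin
  apply sum_ne_zero_of_mem hpos (Finset.mem_univ w)
  rw [if_pos rfl]
  exact hw

lemma mrg_congr {R : Tup Dom (Finset.univ : Finset V) → K} {A : Finset V}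
    {w w' : Tup Dom (Finset.univ : Finset V)} (h : agreeOn A w w') :
    mrg R A w = mrg R A w' := by
  unfold mrg
  rw [(restrict_eq_iff (Finset.subset_univ A)).mpr h]

lemma mrg_support (hpos : plusPos K) {R : Tup Dom (Finset.univ : Finset V) → K}
    {A : Finset V} {w : Tup Dom (Finset.univ : Finset V)} :
    mrg R A w ≠ 0 ↔ ∃ w', R w' ≠ 0 ∧ agreeOn A w' w := by
  classical
  constructor
  · intro h
    by_contra hno
    push_neg at hno
    apply h
    unfold mrg margin
    apply Finset.sum_eq_zero
    intro w' _
    by_cases he : Tup.restrict (Finset.subset_univ A) w' = Tup.restrict (Finset.subset_univ A) w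
    · rw [if_pos he]
      by_contra hR
      exact hno w' hR ((restrict_eq_iff _).mp he)
    · rw [if_neg he]
  · rintro ⟨w', hR, hag⟩
    have : mrg R A w = mrg R A w' := (mrg_congr (fun v hv => (hag v hv).symm))
    rw [this]
    exact mrg_ne_zero hpos hR

lemma margin_of_cover {A : Finset V} (hc : A = Finset.univ)
    (R : Tup Dom (Finset.univ : Finset V) → K)
    (w : Tup Dom (Finset.univ : Finset V)) :
    mrg R A w = R w := by
  classical
  subst hc
  unfold mrg margin
  have : ∀ w' : Tup Dom (Finset.univ : Finset V),
      (if Tup.restrict (Finset.subset_univ Finset.univ) w' =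
          Tup.restrict (Finset.subset_univ Finset.univ) w then R w' else 0) =
      (if w' = w then R w' else 0) := by
    intro w'
    by_cases h : w' = w
    · subst h; simp
    · rw [if_neg h, if_neg]
      intro he
      exact h (tup_ext (fun v => ((restrict_eq_iff (Finset.subset_univ _)).mp he) v (Finset.mem_univ v)))
  rw [Finset.sum_congr rfl (fun w' _ => this w')]
  exact Fintype.sum_ite_eq' w (fun w' => R w')

end Aux

section Char
set_option linter.unusedSectionVars false
set_option maxHeartbeats 1000000

variable {K : Type*} [CommSemiring K] [DecidableEq V] [Fintype V]
variable {Dom : V → Type*} [∀ a, Fintype (Dom a)]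

/-- Pointwise form of a saturated CI, on full tuples. -/
def pointwiseCI (R : Tup Dom (Finset.univ : Finset V) → K) (X Y Z : Finset V) : Prop :=
  ∀ w, mrg R (X ∪ Y) w * mrg R (X ∪ Z) w = R w * mrg R X w

/-- Support-box plus exchange condition for a saturated CI. -/
def goodCI (R : Tup Dom (Finset.univ : Finset V) → K) (X Z : Finset V) : Prop :=
  ∀ t s, R t ≠ 0 → R s ≠ 0 → agreeOn X t s →
    R (mixOn Z t s) ≠ 0 ∧ R t * R s = R (mixOn Z t s) * R (mixOn Z s t)

lemma satCI_iff_pointwise {R : Tup Dom (Finset.univ : Finset V) → K}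
    {X Y Z : Finset V} (hcov : X ∪ Y ∪ Z = Finset.univ) :
    satCI R (Finset.subset_univ X) (Finset.subset_univ Y) (Finset.subset_univ Z) ↔
      pointwiseCI R X Y Z := by
  constructor
  · intro hs w
    have h := hs (Tup.restrict (Finset.subset_univ (X ∪ Y ∪ Z)) w)
    rw [restrict_restrict _ _ (Finset.subset_univ (X ∪ Y)),
        restrict_restrict _ _ (Finset.subset_univ (X ∪ Z)),
        restrict_restrict _ _ (Finset.subset_univ X)] at h
    have hbig : margin R (Finset.union_subset (Finset.union_subset (Finset.subset_univ X) (Finset.subset_univ Y)) (Finset.subset_univ Z))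
        (Tup.restrict (Finset.subset_univ (X ∪ Y ∪ Z)) w) = R w := margin_of_cover hcov R w
    rw [hbig] at h
    exact h
  · intro hp tt
    set w : Tup Dom (Finset.univ : Finset V) :=
      fun a => tt ⟨a.1, by rw [hcov]; exact a.2⟩ with hw
    have htt : Tup.restrict (Finset.subset_univ (X ∪ Y ∪ Z)) w = tt := by
      funext a
      rfl
    rw [← htt]
    rw [restrict_restrict _ _ (Finset.subset_univ (X ∪ Y)),
        restrict_restrict _ _ (Finset.subset_univ (X ∪ Z)),
        restrict_restrict _ _ (Finset.subset_univ X)]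
    have hbig : margin R (Finset.union_subset (Finset.union_subset (Finset.subset_univ X) (Finset.subset_univ Y)) (Finset.subset_univ Z))
        (Tup.restrict (Finset.subset_univ (X ∪ Y ∪ Z)) w) = R w := margin_of_cover hcov R w
    rw [hbig]
    exact hp w

lemma cancel_right (hmc : mulCanc K) {a b x : K} (hx : x ≠ 0) (h : a * x = b * x) :
    a = b := hmc x a b hx (by rw [mul_comm x a, mul_comm x b]; exact h)

lemma mul_ne_zero' (hnzd : noZD K) {a b : K} (ha : a ≠ 0) (hb : b ≠ 0) : a * b ≠ 0 :=
  fun h => (hnzd a b h).elim ha hb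

/-- A member of the union cover: every variable is in `X`, `Y` or `Z`. -/
lemma mem_cover {X Y Z : Finset V} (hcov : X ∪ Y ∪ Z = Finset.univ) (v : V) :
    v ∈ X ∨ v ∈ Y ∨ v ∈ Z := by
  have : v ∈ X ∪ Y ∪ Z := by rw [hcov]; exact Finset.mem_univ v
  rcases Finset.mem_union.mp this with h | h
  · rcases Finset.mem_union.mp h with h | h
    · exact Or.inl h
    · exact Or.inr (Or.inl h)
  · exact Or.inr (Or.inr h)

lemma pointwise_to_good {R : Tup Dom (Finset.univ : Finset V) → K}
    {X Y Z : Finset V} (hpos : plusPos K) (hnzd : noZD K) (hmc : mulCanc K)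
    (hXY : Disjoint X Y) (hXZ : Disjoint X Z) (hYZ : Disjoint Y Z)
    (hcov : X ∪ Y ∪ Z = Finset.univ)
    (hp : pointwiseCI R X Y Z) : goodCI R X Z := by
  intro t s ht hs hX
  set m := mixOn Z t s with hm
  set m' := mixOn Z s t with hm'
  -- agreement facts
  have hAXYm : agreeOn (X ∪ Y) m t := by
    intro v hv
    have hvZ : v ∉ Z := by
      intro hvZ
      rcases Finset.mem_union.mp hv with h | h
      · exact (Finset.disjoint_left.mp hXZ) h hvZ
      · exact (Finset.disjoint_left.mp hYZ) h hvZ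
    rw [hm, ev_mixOn, if_neg hvZ]
  have hAXYm' : agreeOn (X ∪ Y) m' s := by
    intro v hv
    have hvZ : v ∉ Z := by
      intro hvZ
      rcases Finset.mem_union.mp hv with h | h
      · exact (Finset.disjoint_left.mp hXZ) h hvZ
      · exact (Finset.disjoint_left.mp hYZ) h hvZ
    rw [hm', ev_mixOn, if_neg hvZ]
  have hAXZm : agreeOn (X ∪ Z) m s := by
    intro v hv
    rcases Finset.mem_union.mp hv with h | h
    · have hvZ : v ∉ Z := fun hvZ => (Finset.disjoint_left.mp hXZ) h hvZ
      rw [hm, ev_mixOn, if_neg hvZ]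
      exact hX v h
    · rw [hm, ev_mixOn, if_pos h]
  have hAXZm' : agreeOn (X ∪ Z) m' t := by
    intro v hv
    rcases Finset.mem_union.mp hv with h | h
    · have hvZ : v ∉ Z := fun hvZ => (Finset.disjoint_left.mp hXZ) h hvZ
      rw [hm', ev_mixOn, if_neg hvZ]
      exact (hX v h).symm
    · rw [hm', ev_mixOn, if_pos h]
  have hXm : agreeOn X m t := fun v hv => hAXYm v (Finset.mem_union_left _ hv)
  have hXm' : agreeOn X m' s := fun v hv => hAXYm' v (Finset.mem_union_left _ hv)
  have hXts : agreeOn X t s := hX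
  -- margins
  have e_t := hp t
  have e_s := hp s
  have e_m := hp m
  have e_m' := hp m'
  rw [mrg_congr hAXYm, mrg_congr hAXZm, mrg_congr hXm] at e_m
  rw [mrg_congr hAXYm', mrg_congr hAXZm', mrg_congr hXm'] at e_m'
  have hXs_t : mrg R X s = mrg R X t := mrg_congr (fun v hv => (hX v hv).symm)
  rw [hXs_t] at e_s e_m'
  set n := mrg R X t with hn
  have hnne : n ≠ 0 := mrg_ne_zero hpos ht
  have hXYt : mrg R (X ∪ Y) t ≠ 0 := mrg_ne_zero hpos ht
  have hXZs : mrg R (X ∪ Z) s ≠ 0 := mrg_ne_zero hpos hs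
  have hXYs : mrg R (X ∪ Y) s ≠ 0 := mrg_ne_zero hpos hs
  have hXZt : mrg R (X ∪ Z) t ≠ 0 := mrg_ne_zero hpos ht
  constructor
  · -- box condition
    intro hRm
    rw [hRm, zero_mul] at e_m
    exact (mul_ne_zero' hnzd hXYt hXZs) e_m
  · -- exchange identity
    have key : (R t * R s) * (n * n) = (R m * R m') * (n * n) := by
      calc (R t * R s) * (n * n) = (R t * n) * (R s * n) := by ring
        _ = (mrg R (X ∪ Y) t * mrg R (X ∪ Z) t) * (mrg R (X ∪ Y) s * mrg R (X ∪ Z) s) := by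
            rw [e_t, e_s]
        _ = (mrg R (X ∪ Y) t * mrg R (X ∪ Z) s) * (mrg R (X ∪ Y) s * mrg R (X ∪ Z) t) := by
            ring
        _ = (R m * n) * (R m' * n) := by rw [e_m, e_m']
        _ = (R m * R m') * (n * n) := by ring
    exact cancel_right hmc (mul_ne_zero' hnzd hnne hnne) key

end Char

section Char2
set_option linter.unusedSectionVars false
set_option maxHeartbeats 1000000
variable {K : Type*} [CommSemiring K] [DecidableEq V] [Fintype V]
variable {Dom : V → Type*} [∀ a, Fintype (Dom a)]

open Classical in
lemma mrg_eq_sum_filter (R : Tup Dom (Finset.univ : Finset V) → K) (A : Finset V)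
    (w : Tup Dom (Finset.univ : Finset V)) :
    mrg R A w = ∑ w1 ∈ Finset.univ.filter (fun w1 => agreeOn A w1 w), R w1 := by
  unfold mrg margin
  rw [Finset.sum_filter]
  exact Finset.sum_congr rfl fun w1 _ =>
    if_congr (restrict_eq_iff (Finset.subset_univ A)) rfl rfl

lemma good_to_pointwise {R : Tup Dom (Finset.univ : Finset V) → K}
    {X Y Z : Finset V}
    (hXZ : Disjoint X Z) (hYZ : Disjoint Y Z)
    (hcov : X ∪ Y ∪ Z = Finset.univ)
    (hg : goodCI R X Z) : pointwiseCI R X Y Z := by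
  classical
  intro w
  have hnotZ : ∀ v : V, v ∉ Z → v ∈ X ∪ Y := by
    intro v hv
    rcases mem_cover hcov v with h | h | h
    · exact Finset.mem_union_left _ h
    · exact Finset.mem_union_right _ h
    · exact absurd h hv
  have hXnotZ : ∀ v : V, v ∈ X → v ∉ Z := fun v hv => Finset.disjoint_left.mp hXZ hv
  have hXYnotZ : ∀ v : V, v ∈ X ∪ Y → v ∉ Z := by
    intro v hv
    rcases Finset.mem_union.mp hv with h | h
    · exact hXnotZ v h
    · exact Finset.disjoint_left.mp hYZ h
  rw [mrg_eq_sum_filter R (X ∪ Y) w, mrg_eq_sum_filter R (X ∪ Z) w,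
    mrg_eq_sum_filter R X w, Finset.sum_mul_sum, Finset.mul_sum, ← Finset.sum_product']
  refine Finset.sum_bij' (i := fun p _ => mixOn Z p.2 p.1)
    (j := fun w3 _ => (mixOn Z w w3, mixOn Z w3 w)) ?_ ?_ ?_ ?_ ?_
  · -- i maps into target
    rintro ⟨p1, p2⟩ hp
    rw [Finset.mem_product] at hp
    obtain ⟨hp1, hp2⟩ := hp
    rw [Finset.mem_filter] at hp1 hp2 ⊢
    refine ⟨Finset.mem_univ _, ?_⟩
    intro v hv
    have hvZ : v ∉ Z := hXnotZ v hv
    rw [ev_mixOn, if_neg hvZ]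
    exact hp2.2 v (Finset.mem_union_left _ hv)
  · -- j maps into source
    intro w3 h3
    rw [Finset.mem_filter] at h3
    rw [Finset.mem_product, Finset.mem_filter, Finset.mem_filter]
    refine ⟨⟨Finset.mem_univ _, ?_⟩, Finset.mem_univ _, ?_⟩
    · intro v hv
      rw [ev_mixOn, if_neg (hXYnotZ v hv)]
    · intro v hv
      rcases Finset.mem_union.mp hv with h | h
      · rw [ev_mixOn, if_neg (hXnotZ v h)]
        exact h3.2 v h
      · rw [ev_mixOn, if_pos h]
  · -- left inverse
    rintro ⟨p1, p2⟩ hp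
    rw [Finset.mem_product] at hp
    obtain ⟨hp1, hp2⟩ := hp
    rw [Finset.mem_filter] at hp1 hp2
    have e1 : mixOn Z w (mixOn Z p2 p1) = p1 := by
      apply tup_ext
      intro v
      by_cases hv : v ∈ Z
      · rw [ev_mixOn, if_pos hv, ev_mixOn, if_pos hv]
      · rw [ev_mixOn, if_neg hv]
        exact (hp1.2 v (hnotZ v hv)).symm
    have e2 : mixOn Z (mixOn Z p2 p1) w = p2 := by
      apply tup_ext
      intro v
      by_cases hv : v ∈ Z
      · rw [ev_mixOn, if_pos hv]
        exact (hp2.2 v (Finset.mem_union_right _ hv)).symm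
      · rw [ev_mixOn, if_neg hv, ev_mixOn, if_neg hv]
    simp only [Prod.mk.injEq]
    exact ⟨e1, e2⟩
  · -- right inverse
    intro w3 h3
    apply tup_ext
    intro v
    by_cases hv : v ∈ Z
    · rw [ev_mixOn, if_pos hv, ev_mixOn, if_pos hv]
    · rw [ev_mixOn, if_neg hv, ev_mixOn, if_neg hv]
  · -- values
    rintro ⟨p1, p2⟩ hp
    rw [Finset.mem_product] at hp
    obtain ⟨hp1, hp2⟩ := hp
    rw [Finset.mem_filter] at hp1 hp2
    show R p1 * R p2 = R w * R (mixOn Z p2 p1)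
    have hagX : agreeOn X p1 p2 := by
      intro v hv
      rw [hp1.2 v (Finset.mem_union_left _ hv), ← hp2.2 v (Finset.mem_union_left _ hv)]
    by_cases hw : R w = 0
    · rw [hw, zero_mul]
      by_cases h1 : R p1 = 0
      · rw [h1, zero_mul]
      by_cases h2 : R p2 = 0
      · rw [h2, mul_zero]
      exfalso
      have hbox := (hg p1 p2 h1 h2 hagX).1
      have : mixOn Z p1 p2 = w := by
        apply tup_ext
        intro v
        by_cases hv : v ∈ Z
        · rw [ev_mixOn, if_pos hv]
          exact hp2.2 v (Finset.mem_union_right _ hv)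
        · rw [ev_mixOn, if_neg hv]
          exact hp1.2 v (hnotZ v hv)
      rw [this] at hbox
      exact hbox hw
    · by_cases h3 : R (mixOn Z p2 p1) = 0
      · rw [h3, mul_zero]
        by_cases h1 : R p1 = 0
        · rw [h1, zero_mul]
        by_cases h2 : R p2 = 0
        · rw [h2, mul_zero]
        exact absurd h3 (hg p2 p1 h2 h1 (fun v hv => (hagX v hv).symm)).1
      · have hagw : agreeOn X w (mixOn Z p2 p1) := by
          intro v hv
          rw [ev_mixOn, if_neg (hXnotZ v hv)]
          exact (hp2.2 v (Finset.mem_union_left _ hv)).symm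
        have hx := (hg w (mixOn Z p2 p1) hw h3 hagw).2
        have e1 : mixOn Z w (mixOn Z p2 p1) = p1 := by
          apply tup_ext
          intro v
          by_cases hv : v ∈ Z
          · rw [ev_mixOn, if_pos hv, ev_mixOn, if_pos hv]
          · rw [ev_mixOn, if_neg hv]
            exact (hp1.2 v (hnotZ v hv)).symm
        have e2 : mixOn Z (mixOn Z p2 p1) w = p2 := by
          apply tup_ext
          intro v
          by_cases hv : v ∈ Z
          · rw [ev_mixOn, if_pos hv]
            exact (hp2.2 v (Finset.mem_union_right _ hv)).symm
          · rw [ev_mixOn, if_neg hv, ev_mixOn, if_neg hv]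
        rw [e1, e2] at hx
        exact hx.symm

end Char2

/-! ### The splice closure of `{∅, D}` under the CIs of a constraint set -/

/-- Closure of `{∅, D}` under splices along the saturated CIs in `Sig`. -/
inductive SpliceCl [DecidableEq V] (Sig : Set (Constraint V)) (D : Finset V) :
    Finset V → Prop where
  | base0 : SpliceCl Sig D ∅
  | base1 : SpliceCl Sig D D
  | splice (X Y Z A B : Finset V) (hs : Constraint.ci X Y Z ∈ Sig)
      (hA : SpliceCl Sig D A) (hB : SpliceCl Sig D B)
      (hx : A ∩ (X ∩ D) = B ∩ (X ∩ D)) :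
      SpliceCl Sig D ((A ∩ ((X ∪ Y) ∩ D)) ∪ (B ∩ (Z ∩ D)))

section Closure
set_option linter.unusedSectionVars false
set_option maxHeartbeats 1000000

variable [DecidableEq V] [Fintype V] {Sig : Set (Constraint V)} {D : Finset V}
variable (hP : ∀ X Y Z : Finset V, Constraint.ci X Y Z ∈ Sig →
    Disjoint X Y ∧ Disjoint X Z ∧ Disjoint Y Z ∧ X ∪ Y ∪ Z = Finset.univ)

lemma SpliceCl.subsetD {A : Finset V} (h : SpliceCl Sig D A) : A ⊆ D := by
  induction h with
  | base0 => exact Finset.empty_subset D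
  | base1 => exact Finset.Subset.refl D
  | splice X Y Z A B hs hA hB hx ihA ihB =>
      intro v hv
      rcases Finset.mem_union.mp hv with h | h
      · exact (Finset.mem_inter.mp (Finset.mem_inter.mp h).2).2
      · exact (Finset.mem_inter.mp (Finset.mem_inter.mp h).2).2

include hP in
lemma SpliceCl.compl {A : Finset V} (h : SpliceCl Sig D A) : SpliceCl Sig D (D \ A) := by
  induction h with
  | base0 => rw [Finset.sdiff_empty]; exact .base1
  | base1 => rw [Finset.sdiff_self]; exact .base0
  | splice X Y Z A B hs hA hB hx ihA ihB =>
      obtain ⟨hXY, hXZ, hYZ, hcov⟩ := hP X Y Z hs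
      have hx' : (D \ A) ∩ (X ∩ D) = (D \ B) ∩ (X ∩ D) := by
        ext v
        simp only [Finset.mem_inter, Finset.mem_sdiff]
        constructor
        · rintro ⟨⟨hvD, hvA⟩, hvX⟩
          refine ⟨⟨hvD, fun hvB => ?_⟩, hvX⟩
          have : v ∈ A ∩ (X ∩ D) := by rw [hx]; exact Finset.mem_inter.mpr ⟨hvB, Finset.mem_inter.mpr hvX⟩
          exact hvA (Finset.mem_inter.mp this).1
        · rintro ⟨⟨hvD, hvB⟩, hvX⟩
          refine ⟨⟨hvD, fun hvA => ?_⟩, hvX⟩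
          have : v ∈ B ∩ (X ∩ D) := by rw [← hx]; exact Finset.mem_inter.mpr ⟨hvA, Finset.mem_inter.mpr hvX⟩
          exact hvB (Finset.mem_inter.mp this).1
      have heq : D \ ((A ∩ ((X ∪ Y) ∩ D)) ∪ (B ∩ (Z ∩ D))) =
          (((D \ A) ∩ ((X ∪ Y) ∩ D)) ∪ ((D \ B) ∩ (Z ∩ D))) := by
        ext v
        have hvcov : v ∈ X ∨ v ∈ Y ∨ v ∈ Z := mem_cover hcov v
        have hYZv : v ∈ Y → v ∉ Z := fun h => Finset.disjoint_left.mp hYZ h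
        have hXZv : v ∈ X → v ∉ Z := fun h => Finset.disjoint_left.mp hXZ h
        simp only [Finset.mem_sdiff, Finset.mem_union, Finset.mem_inter]
        tauto
      rw [heq]
      exact .splice X Y Z _ _ hs ihA ihB hx'

include hP in
lemma SpliceCl.inter_union {A : Finset V} (h : SpliceCl Sig D A) :
    ∀ Q : Finset V, SpliceCl Sig D Q →
      SpliceCl Sig D (A ∩ Q) ∧ SpliceCl Sig D (A ∪ Q) := by
  induction h with
  | base0 =>
      intro Q hQ
      constructor
      · rw [Finset.empty_inter]; exact .base0
      · rw [Finset.empty_union]; exact hQ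
  | base1 =>
      intro Q hQ
      constructor
      · rw [Finset.inter_eq_right.mpr hQ.subsetD]; exact hQ
      · rw [Finset.union_eq_left.mpr hQ.subsetD]; exact .base1
  | splice X Y Z A B hs hA hB hx ihA ihB =>
      intro Q hQ
      obtain ⟨hXY, hXZ, hYZ, hcov⟩ := hP X Y Z hs
      constructor
      · have heq : ((A ∩ ((X ∪ Y) ∩ D)) ∪ (B ∩ (Z ∩ D))) ∩ Q =
            (((A ∩ Q) ∩ ((X ∪ Y) ∩ D)) ∪ ((B ∩ Q) ∩ (Z ∩ D))) := by
          ext v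
          simp only [Finset.mem_union, Finset.mem_inter]
          tauto
        have hx' : (A ∩ Q) ∩ (X ∩ D) = (B ∩ Q) ∩ (X ∩ D) := by
          have h1 : (A ∩ Q) ∩ (X ∩ D) = (A ∩ (X ∩ D)) ∩ Q := by
            ext v; simp only [Finset.mem_inter]; tauto
          have h2 : (B ∩ Q) ∩ (X ∩ D) = (B ∩ (X ∩ D)) ∩ Q := by
            ext v; simp only [Finset.mem_inter]; tauto
          rw [h1, h2, hx]
        rw [heq]
        exact .splice X Y Z _ _ hs (ihA Q hQ).1 (ihB Q hQ).1 hx'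
      · have heq : ((A ∩ ((X ∪ Y) ∩ D)) ∪ (B ∩ (Z ∩ D))) ∪ Q =
            (((A ∪ Q) ∩ ((X ∪ Y) ∩ D)) ∪ ((B ∪ Q) ∩ (Z ∩ D))) := by
          ext v
          have hvcov : v ∈ X ∨ v ∈ Y ∨ v ∈ Z := mem_cover hcov v
          have hQD : v ∈ Q → v ∈ D := fun h => hQ.subsetD h
          simp only [Finset.mem_union, Finset.mem_inter]
          tauto
        have hx' : (A ∪ Q) ∩ (X ∩ D) = (B ∪ Q) ∩ (X ∩ D) := by
          rw [Finset.union_inter_distrib_right, Finset.union_inter_distrib_right, hx]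
        rw [heq]
        exact .splice X Y Z _ _ hs (ihA Q hQ).2 (ihB Q hQ).2 hx'

include hP in
lemma SpliceCl.inter {A B : Finset V} (hA : SpliceCl Sig D A) (hB : SpliceCl Sig D B) :
    SpliceCl Sig D (A ∩ B) := (hA.inter_union hP B hB).1

include hP in
lemma SpliceCl.union {A B : Finset V} (hA : SpliceCl Sig D A) (hB : SpliceCl Sig D B) :
    SpliceCl Sig D (A ∪ B) := (hA.inter_union hP B hB).2

include hP in
lemma SpliceCl.sdiff {A B : Finset V} (hA : SpliceCl Sig D A) (hB : SpliceCl Sig D B) :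
    SpliceCl Sig D (A \ B) := by
  have h1 : A \ B = A ∩ (D \ B) := by
    ext v
    simp only [Finset.mem_sdiff, Finset.mem_inter]
    have hAD : v ∈ A → v ∈ D := fun hv => hA.subsetD hv
    tauto
  rw [h1]
  exact hA.inter hP (hB.compl hP)

end Closure

section Blocks
set_option linter.unusedSectionVars false
set_option maxHeartbeats 1000000

variable [DecidableEq V] [Fintype V] {Sig : Set (Constraint V)} {D : Finset V}
variable (hP : ∀ X Y Z : Finset V, Constraint.ci X Y Z ∈ Sig →
    Disjoint X Y ∧ Disjoint X Z ∧ Disjoint Y Z ∧ X ∪ Y ∪ Z = Finset.univ)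

open Classical in
/-- The block (atom of the splice closure) of a variable `d ∈ D`. -/
noncomputable def blk (Sig : Set (Constraint V)) (D : Finset V) (d : V) : Finset V :=
  D.filter (fun v => ∀ A : Finset V, SpliceCl Sig D A → (v ∈ A ↔ d ∈ A))

open Classical in
lemma mem_blk {d v : V} :
    v ∈ blk Sig D d ↔ v ∈ D ∧ ∀ A : Finset V, SpliceCl Sig D A → (v ∈ A ↔ d ∈ A) := by
  unfold blk
  rw [Finset.mem_filter]

lemma blk_subsetD {d : V} : blk Sig D d ⊆ D := by
  intro v hv
  exact (mem_blk.mp hv).1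

lemma self_mem_blk {d : V} (hd : d ∈ D) : d ∈ blk Sig D d :=
  mem_blk.mpr ⟨hd, fun _ _ => Iff.rfl⟩

lemma blk_subset_of_mem {d : V} {A : Finset V} (hA : SpliceCl Sig D A) (hd : d ∈ A) :
    blk Sig D d ⊆ A := by
  intro v hv
  exact ((mem_blk.mp hv).2 A hA).mpr hd

lemma blk_disjoint_of_notMem {d : V} {A : Finset V} (hA : SpliceCl Sig D A)
    (hd : d ∉ A) : Disjoint (blk Sig D d) A := by
  rw [Finset.disjoint_left]
  intro v hv hvA
  exact hd (((mem_blk.mp hv).2 A hA).mp hvA)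

lemma blk_eq_of_mem {d e : V} (he : e ∈ blk Sig D d) : blk Sig D e = blk Sig D d := by
  obtain ⟨heD, hiff⟩ := mem_blk.mp he
  ext v
  rw [mem_blk, mem_blk]
  constructor
  · rintro ⟨hvD, h⟩
    exact ⟨hvD, fun A hA => (h A hA).trans (hiff A hA)⟩
  · rintro ⟨hvD, h⟩
    exact ⟨hvD, fun A hA => (h A hA).trans (hiff A hA).symm⟩

lemma mem_finset_inf {α : Type*} [DecidableEq α] [Fintype α]
    (S : Finset (Finset α)) (g : Finset α → Finset α) (v : α) :
    v ∈ S.inf g ↔ ∀ A ∈ S, v ∈ g A := by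
  induction S using Finset.induction_on with
  | empty => simp [Finset.inf_empty, Finset.top_eq_univ]
  | @insert A S hAS ih =>
      rw [Finset.inf_insert]
      simp only [Finset.inf_eq_inter, Finset.mem_inter, ih, Finset.mem_insert]
      constructor
      · rintro ⟨h1, h2⟩ B hB
        rcases hB with rfl | hB
        · exact h1
        · exact h2 B hB
      · intro h
        exact ⟨h A (Or.inl rfl), fun B hB => h B (Or.inr hB)⟩

open Classical in
include hP in
/-- Each block belongs to the splice closure. -/
lemma SpliceCl.blk_mem {d : V} (hd : d ∈ D) : SpliceCl Sig D (blk Sig D d) := by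
  classical
  -- the finite family of all members of the closure
  set F : Finset (Finset V) := D.powerset.filter (fun A => SpliceCl Sig D A) with hF
  have memF : ∀ A : Finset V, A ∈ F ↔ SpliceCl Sig D A := by
    intro A
    rw [hF, Finset.mem_filter, Finset.mem_powerset]
    exact ⟨fun h => h.2, fun h => ⟨h.subsetD, h⟩⟩
  set g : Finset V → Finset V := fun A => if d ∈ A then A else D \ A with hg
  -- inf of a family of closure members intersected with D is in the closure
  have key : ∀ S : Finset (Finset V), (∀ A ∈ S, SpliceCl Sig D (g A ∩ D)) →
      SpliceCl Sig D (S.inf g ∩ D) := by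
    intro S
    induction S using Finset.induction_on with
    | empty =>
        intro _
        rw [Finset.inf_empty]
        have : (⊤ : Finset V) ∩ D = D := by
          ext v
          simp [Finset.top_eq_univ]
        rw [this]
        exact .base1
    | @insert A S hAS ih =>
        intro hall
        rw [Finset.inf_insert]
        have : (g A ⊓ S.inf g) ∩ D = (g A ∩ D) ∩ (S.inf g ∩ D) := by
          ext v
          simp only [Finset.inf_eq_inter, Finset.mem_inter]
          tauto
        rw [this]
        exact SpliceCl.inter hP (hall A (Finset.mem_insert_self A S))
          (ih (fun B hB => hall B (Finset.mem_insert_of_mem hB)))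
  have hmem : ∀ A ∈ F, SpliceCl Sig D (g A ∩ D) := by
    intro A hA
    have hclA : SpliceCl Sig D A := (memF A).mp hA
    rw [hg]
    by_cases hd' : d ∈ A
    · simp only [if_pos hd']
      rw [Finset.inter_eq_left.mpr hclA.subsetD]
      exact hclA
    · simp only [if_neg hd']
      rw [Finset.inter_eq_left.mpr Finset.sdiff_subset]
      exact hclA.compl hP
  have hinf := key F hmem
  -- now show blk = F.inf g ∩ D
  have hblk : blk Sig D d = F.inf g ∩ D := by
    ext v
    rw [mem_blk, Finset.mem_inter]
    have hvinf : v ∈ F.inf g ↔ ∀ A ∈ F, v ∈ g A := mem_finset_inf F g v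
    constructor
    · rintro ⟨hvD, hiff⟩
      refine ⟨hvinf.mpr ?_, hvD⟩
      intro A hAF
      have hclA : SpliceCl Sig D A := (memF A).mp hAF
      simp only [hg]
      by_cases hd' : d ∈ A
      · rw [if_pos hd']
        exact (hiff A hclA).mpr hd'
      · rw [if_neg hd']
        rw [Finset.mem_sdiff]
        exact ⟨hvD, fun hvA => hd' ((hiff A hclA).mp hvA)⟩
    · rintro ⟨hvinf', hvD⟩
      refine ⟨hvD, ?_⟩
      intro A hclA
      have hAF : A ∈ F := (memF A).mpr hclA
      have := hvinf.mp hvinf' A hAF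
      simp only [hg] at this
      by_cases hd' : d ∈ A
      · rw [if_pos hd'] at this
        exact ⟨fun _ => hd', fun _ => this⟩
      · rw [if_neg hd'] at this
        rw [Finset.mem_sdiff] at this
        exact ⟨fun hvA => absurd hvA this.2, fun hdA => absurd hdA hd'⟩
  rw [hblk]
  exact hinf

/-- Two blocks are separated by a CI of `Sig`. -/
def Separated (Sig : Set (Constraint V)) (b c : Finset V) : Prop :=
  ∃ X Y Z : Finset V, Constraint.ci X Y Z ∈ Sig ∧ (b ∪ c) ∩ X = ∅ ∧
    ((b ⊆ Y ∧ c ⊆ Z) ∨ (b ⊆ Z ∧ c ⊆ Y))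

include hP in
/-- Separation lemma: if some member of the closure separates `d` from `e`,
then the blocks of `d` and `e` are separated by a CI of `Sig`. -/
lemma separation {P : Finset V} (hcl : SpliceCl Sig D P) :
    ∀ d e : V, d ∈ D → e ∈ D → d ∈ P → e ∉ P →
      Separated Sig (blk Sig D d) (blk Sig D e) := by
  induction hcl with
  | base0 => intro d e _ _ hd _; exact absurd hd (Finset.notMem_empty d)
  | base1 => intro d e _ he _ heP; exact absurd he heP
  | splice X Y Z A B hs hA hB hx ihA ihB =>
      intro d e hdD heD hdP heP
      obtain ⟨hXY, hXZ, hYZ, hcov⟩ := hP X Y Z hs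
      have hclP : SpliceCl Sig D ((A ∩ ((X ∪ Y) ∩ D)) ∪ (B ∩ (Z ∩ D))) :=
        .splice X Y Z A B hs hA hB hx
      set b := blk Sig D d with hbdef
      set c := blk Sig D e with hcdef
      have hbP : b ⊆ (A ∩ ((X ∪ Y) ∩ D)) ∪ (B ∩ (Z ∩ D)) :=
        blk_subset_of_mem hclP hdP
      have hcP : ∀ v ∈ c, v ∉ (A ∩ ((X ∪ Y) ∩ D)) ∪ (B ∩ (Z ∩ D)) :=
        Finset.disjoint_left.mp (blk_disjoint_of_notMem hclP heP)
      have hbD : ∀ v ∈ b, v ∈ D := fun v hv => blk_subsetD hv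
      have hcD : ∀ v ∈ c, v ∈ D := fun v hv => blk_subsetD hv
      have hbA : ∀ v ∈ b, (v ∈ A ↔ d ∈ A) := fun v hv => (mem_blk.mp hv).2 A hA
      have hbB : ∀ v ∈ b, (v ∈ B ↔ d ∈ B) := fun v hv => (mem_blk.mp hv).2 B hB
      have hcA : ∀ v ∈ c, (v ∈ A ↔ e ∈ A) := fun v hv => (mem_blk.mp hv).2 A hA
      have hcB : ∀ v ∈ c, (v ∈ B ↔ e ∈ B) := fun v hv => (mem_blk.mp hv).2 B hB
      by_cases hdA : d ∈ A
      · by_cases heA : e ∈ A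
        · -- c inside A, hence c ⊆ Z
          have hcZ : ∀ v ∈ c, v ∈ Z := by
            intro v hv
            have hvD : v ∈ D := hcD v hv
            have hvA : v ∈ A := (hcA v hv).mpr heA
            rcases mem_cover hcov v with h | h | h
            · exact absurd (Finset.mem_union_left _ (Finset.mem_inter.mpr
                ⟨hvA, Finset.mem_inter.mpr ⟨Finset.mem_union_left _ h, hvD⟩⟩)) (hcP v hv)
            · exact absurd (Finset.mem_union_left _ (Finset.mem_inter.mpr
                ⟨hvA, Finset.mem_inter.mpr ⟨Finset.mem_union_right _ h, hvD⟩⟩)) (hcP v hv)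
            · exact h
          have heB : e ∉ B := by
            intro heB
            have hec : e ∈ c := self_mem_blk heD
            exact hcP e hec (Finset.mem_union_right _ (Finset.mem_inter.mpr
              ⟨heB, Finset.mem_inter.mpr ⟨hcZ e hec, heD⟩⟩))
          by_cases hdB : d ∈ B
          · exact ihB d e hdD heD hdB heB
          · -- produce separation via (X, Y, Z)
            have hbX : ∀ v ∈ b, v ∉ X := by
              intro v hv hvX
              have hvA : v ∈ A := (hbA v hv).mpr hdA
              have : v ∈ B ∩ (X ∩ D) := by
                rw [← hx]
                exact Finset.mem_inter.mpr ⟨hvA, Finset.mem_inter.mpr ⟨hvX, hbD v hv⟩⟩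
              exact hdB ((hbB v hv).mp (Finset.mem_inter.mp this).1)
            have hbY : b ⊆ Y := by
              intro v hv
              rcases Finset.mem_union.mp (hbP hv) with h | h
              · rcases Finset.mem_union.mp (Finset.mem_inter.mp
                  (Finset.mem_inter.mp h).2).1 with h' | h'
                · exact absurd h' (hbX v hv)
                · exact h'
              · exact absurd ((hbB v hv).mp (Finset.mem_inter.mp h).1) hdB
            have hcZ' : c ⊆ Z := fun v hv => hcZ v hv
            refine ⟨X, Y, Z, hs, ?_, Or.inl ⟨hbY, hcZ'⟩⟩
            ext v
            simp only [Finset.mem_inter, Finset.mem_union, Finset.notMem_empty,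
              iff_false, not_and]
            rintro (hv | hv) hvX
            · exact hbX v hv hvX
            · exact Finset.disjoint_left.mp hXZ hvX (hcZ v hv)
        · exact ihA d e hdD heD hdA heA
      · -- d ∉ A, so d ∈ B and d ∈ Z ∩ D
        have hdBW : d ∈ B ∧ d ∈ Z := by
          rcases Finset.mem_union.mp hdP with h | h
          · exact absurd (Finset.mem_inter.mp h).1 hdA
          · exact ⟨(Finset.mem_inter.mp h).1,
              (Finset.mem_inter.mp (Finset.mem_inter.mp h).2).1⟩
        obtain ⟨hdB, hdZ⟩ := hdBW
        by_cases heB : e ∈ B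
        · -- c inside B; c avoids Z; c avoids X; so c ⊆ Y
          have hcnZ : ∀ v ∈ c, v ∉ Z := by
            intro v hv hvZ
            exact hcP v hv (Finset.mem_union_right _ (Finset.mem_inter.mpr
              ⟨(hcB v hv).mpr heB, Finset.mem_inter.mpr ⟨hvZ, hcD v hv⟩⟩))
          have hcnX : ∀ v ∈ c, v ∉ X := by
            intro v hv hvX
            have hvB : v ∈ B := (hcB v hv).mpr heB
            have hvA : v ∈ A := by
              have : v ∈ A ∩ (X ∩ D) := by
                rw [hx]
                exact Finset.mem_inter.mpr ⟨hvB, Finset.mem_inter.mpr ⟨hvX, hcD v hv⟩⟩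
              exact (Finset.mem_inter.mp this).1
            exact hcP v hv (Finset.mem_union_left _ (Finset.mem_inter.mpr
              ⟨hvA, Finset.mem_inter.mpr ⟨Finset.mem_union_left _ hvX, hcD v hv⟩⟩))
          have hcY : c ⊆ Y := by
            intro v hv
            rcases mem_cover hcov v with h | h | h
            · exact absurd h (hcnX v hv)
            · exact h
            · exact absurd h (hcnZ v hv)
          have hbZ : b ⊆ Z := by
            intro v hv
            rcases Finset.mem_union.mp (hbP hv) with h | h
            · exact absurd ((hbA v hv).mp (Finset.mem_inter.mp h).1) hdA
            · exact (Finset.mem_inter.mp (Finset.mem_inter.mp h).2).1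
          refine ⟨X, Y, Z, hs, ?_, Or.inr ⟨hbZ, hcY⟩⟩
          ext v
          simp only [Finset.mem_inter, Finset.mem_union, Finset.notMem_empty,
            iff_false, not_and]
          rintro (hv | hv) hvX
          · exact Finset.disjoint_left.mp hXZ hvX (hbZ hv)
          · exact hcnX v hv hvX
        · exact ihB d e hdD heD hdB heB

end Blocks

section Cube
set_option linter.unusedSectionVars false
set_option maxHeartbeats 1600000

variable {K : Type*} [CommSemiring K] [DecidableEq V] [Fintype V]
variable {Dom : V → Type*} [∀ a, Fintype (Dom a)]

open Classical in
/-- The set of variables where two tuples differ. -/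
noncomputable def diffSet (t s : Tup Dom (Finset.univ : Finset V)) : Finset V :=
  Finset.univ.filter (fun v => ev t v ≠ ev s v)

open Classical in
lemma mem_diffSet {t s : Tup Dom (Finset.univ : Finset V)} {v : V} :
    v ∈ diffSet t s ↔ ev t v ≠ ev s v := by
  unfold diffSet
  rw [Finset.mem_filter]
  exact ⟨fun h => h.2, fun h => ⟨Finset.mem_univ v, h⟩⟩

lemma eq_of_notMem_diffSet {t s : Tup Dom (Finset.univ : Finset V)} {v : V}
    (h : v ∉ diffSet t s) : ev t v = ev s v := by
  by_contra hne
  exact h (mem_diffSet.mpr hne)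

lemma cube_empty (t s : Tup Dom (Finset.univ : Finset V)) : mixOn ∅ t s = t := by
  apply tup_ext
  intro v
  rw [ev_mixOn, if_neg (Finset.notMem_empty v)]

lemma cube_diff (t s : Tup Dom (Finset.univ : Finset V)) :
    mixOn (diffSet t s) t s = s := by
  apply tup_ext
  intro v
  rw [ev_mixOn]
  by_cases hv : v ∈ diffSet t s
  · rw [if_pos hv]
  · rw [if_neg hv]
    exact eq_of_notMem_diffSet hv

lemma cube_inj {t s : Tup Dom (Finset.univ : Finset V)} {A B : Finset V}
    (hA : A ⊆ diffSet t s) (hB : B ⊆ diffSet t s)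
    (h : mixOn A t s = mixOn B t s) : A = B := by
  ext v
  constructor
  · intro hv
    by_contra hvB
    have := congrArg (fun w => ev w v) h
    simp only [ev_mixOn, if_pos hv, if_neg hvB] at this
    exact mem_diffSet.mp (hA hv) this.symm
  · intro hv
    by_contra hvA
    have := congrArg (fun w => ev w v) h
    simp only [ev_mixOn, if_pos hv, if_neg hvA] at this
    exact mem_diffSet.mp (hB hv) this

/-- Key computation: a `Z`-mix of two cube tuples is the cube tuple of the splice. -/
lemma cube_mix {t s : Tup Dom (Finset.univ : Finset V)} {X Y Z : Finset V}
    (hXZ : Disjoint X Z) (hYZ : Disjoint Y Z) (hcov : X ∪ Y ∪ Z = Finset.univ)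
    (A B : Finset V) :
    mixOn Z (mixOn A t s) (mixOn B t s) =
      mixOn ((A ∩ ((X ∪ Y) ∩ diffSet t s)) ∪ (B ∩ (Z ∩ diffSet t s))) t s := by
  apply tup_ext
  intro v
  set D := diffSet t s with hD
  simp only [ev_mixOn]
  by_cases hvZ : v ∈ Z
  · rw [if_pos hvZ]
    have hvXY : v ∉ X ∪ Y := by
      intro h
      rcases Finset.mem_union.mp h with h' | h'
      · exact Finset.disjoint_left.mp hXZ h' hvZ
      · exact Finset.disjoint_left.mp hYZ h' hvZ
    by_cases hvB : v ∈ B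
    · by_cases hvD : v ∈ D
      · rw [if_pos hvB, if_pos (Finset.mem_union_right _ (Finset.mem_inter.mpr
          ⟨hvB, Finset.mem_inter.mpr ⟨hvZ, hvD⟩⟩))]
      · rw [if_pos hvB, if_neg ?_]
        · exact (eq_of_notMem_diffSet hvD).symm
        · intro h
          rcases Finset.mem_union.mp h with h' | h'
          · exact hvD (Finset.mem_inter.mp (Finset.mem_inter.mp h').2).2
          · exact hvD (Finset.mem_inter.mp (Finset.mem_inter.mp h').2).2
    · rw [if_neg hvB, if_neg ?_]
      intro h
      rcases Finset.mem_union.mp h with h' | h'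
      · exact hvXY (Finset.mem_inter.mp (Finset.mem_inter.mp h').2).1
      · exact hvB (Finset.mem_inter.mp h').1
  · rw [if_neg hvZ]
    have hvXY : v ∈ X ∪ Y := by
      rcases mem_cover hcov v with h | h | h
      · exact Finset.mem_union_left _ h
      · exact Finset.mem_union_right _ h
      · exact absurd h hvZ
    by_cases hvA : v ∈ A
    · by_cases hvD : v ∈ D
      · rw [if_pos hvA, if_pos (Finset.mem_union_left _ (Finset.mem_inter.mpr
          ⟨hvA, Finset.mem_inter.mpr ⟨hvXY, hvD⟩⟩))]
      · rw [if_pos hvA, if_neg ?_]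
        · exact (eq_of_notMem_diffSet hvD).symm
        · intro h
          rcases Finset.mem_union.mp h with h' | h'
          · exact hvD (Finset.mem_inter.mp (Finset.mem_inter.mp h').2).2
          · exact hvD (Finset.mem_inter.mp (Finset.mem_inter.mp h').2).2
    · rw [if_neg hvA, if_neg ?_]
      intro h
      rcases Finset.mem_union.mp h with h' | h'
      · exact hvA (Finset.mem_inter.mp h').1
      · exact hvZ (Finset.mem_inter.mp (Finset.mem_inter.mp h').2).1

/-- Matching traces give agreement on `X` for cube tuples. -/
lemma cube_agree {t s : Tup Dom (Finset.univ : Finset V)} {X : Finset V}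
    {A B : Finset V}
    (hx : A ∩ (X ∩ diffSet t s) = B ∩ (X ∩ diffSet t s)) :
    agreeOn X (mixOn A t s) (mixOn B t s) := by
  intro v hvX
  rw [ev_mixOn, ev_mixOn]
  by_cases hvD : v ∈ diffSet t s
  · have hAB : v ∈ A ↔ v ∈ B := by
      constructor
      · intro h
        have : v ∈ B ∩ (X ∩ diffSet t s) := by
          rw [← hx]; exact Finset.mem_inter.mpr ⟨h, Finset.mem_inter.mpr ⟨hvX, hvD⟩⟩
        exact (Finset.mem_inter.mp this).1
      · intro h
        have : v ∈ A ∩ (X ∩ diffSet t s) := by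
          rw [hx]; exact Finset.mem_inter.mpr ⟨h, Finset.mem_inter.mpr ⟨hvX, hvD⟩⟩
        exact (Finset.mem_inter.mp this).1
    by_cases hvA : v ∈ A
    · rw [if_pos hvA, if_pos (hAB.mp hvA)]
    · rw [if_neg hvA, if_neg (fun h => hvA (hAB.mpr h))]
  · have he := eq_of_notMem_diffSet hvD
    by_cases hvA : v ∈ A <;> by_cases hvB : v ∈ B <;>
      simp [if_pos, if_neg, hvA, hvB, he]

end Cube

section CubeRel
set_option linter.unusedSectionVars false
set_option maxHeartbeats 1600000

variable {K : Type*} [CommSemiring K] [DecidableEq V] [Fintype V]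
variable {Dom : V → Type*} [∀ a, Fintype (Dom a)]
variable {Sig : Set (Constraint V)}
variable {R : Tup Dom (Finset.univ : Finset V) → K}
variable {t s : Tup Dom (Finset.univ : Finset V)}

lemma cube_supp
    (hP : ∀ X Y Z : Finset V, Constraint.ci X Y Z ∈ Sig →
      Disjoint X Y ∧ Disjoint X Z ∧ Disjoint Y Z ∧ X ∪ Y ∪ Z = Finset.univ)
    (hgood : ∀ X Y Z : Finset V, Constraint.ci X Y Z ∈ Sig → goodCI R X Z)
    (ht : R t ≠ 0) (hs : R s ≠ 0)
    {A : Finset V} (hA : SpliceCl Sig (diffSet t s) A) :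
    R (mixOn A t s) ≠ 0 := by
  induction hA with
  | base0 => rw [cube_empty]; exact ht
  | base1 => rw [cube_diff]; exact hs
  | splice X Y Z A B hσ hA hB hx ihA ihB =>
      obtain ⟨hXY, hXZ, hYZ, hcov⟩ := hP X Y Z hσ
      have hbox := (hgood X Y Z hσ _ _ ihA ihB (cube_agree hx)).1
      rwa [cube_mix hXZ hYZ hcov] at hbox

lemma cube_exch
    (hP : ∀ X Y Z : Finset V, Constraint.ci X Y Z ∈ Sig →
      Disjoint X Y ∧ Disjoint X Z ∧ Disjoint Y Z ∧ X ∪ Y ∪ Z = Finset.univ)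
    (hgood : ∀ X Y Z : Finset V, Constraint.ci X Y Z ∈ Sig → goodCI R X Z)
    (ht : R t ≠ 0) (hs : R s ≠ 0)
    {X Y Z A B : Finset V} (hσ : Constraint.ci X Y Z ∈ Sig)
    (hA : SpliceCl Sig (diffSet t s) A) (hB : SpliceCl Sig (diffSet t s) B)
    (hx : A ∩ (X ∩ diffSet t s) = B ∩ (X ∩ diffSet t s)) :
    R (mixOn A t s) * R (mixOn B t s) =
      R (mixOn ((A ∩ ((X ∪ Y) ∩ diffSet t s)) ∪ (B ∩ (Z ∩ diffSet t s))) t s) *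
        R (mixOn ((B ∩ ((X ∪ Y) ∩ diffSet t s)) ∪ (A ∩ (Z ∩ diffSet t s))) t s) := by
  obtain ⟨hXY, hXZ, hYZ, hcov⟩ := hP X Y Z hσ
  have h2 := (hgood X Y Z hσ _ _ (cube_supp hP hgood ht hs hA)
    (cube_supp hP hgood ht hs hB) (cube_agree hx)).2
  rwa [cube_mix hXZ hYZ hcov A B, cube_mix hXZ hYZ hcov B A] at h2

lemma cube_square_aux
    (hP : ∀ X Y Z : Finset V, Constraint.ci X Y Z ∈ Sig →
      Disjoint X Y ∧ Disjoint X Z ∧ Disjoint Y Z ∧ X ∪ Y ∪ Z = Finset.univ)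
    (hgood : ∀ X Y Z : Finset V, Constraint.ci X Y Z ∈ Sig → goodCI R X Z)
    (ht : R t ≠ 0) (hs : R s ≠ 0)
    {X Y Z b c Q : Finset V} (hσ : Constraint.ci X Y Z ∈ Sig)
    (hbX : ∀ v ∈ b, v ∉ X) (hcX : ∀ v ∈ c, v ∉ X) (hbY : b ⊆ Y) (hcZ : c ⊆ Z)
    (hb : SpliceCl Sig (diffSet t s) b) (hc : SpliceCl Sig (diffSet t s) c)
    (hQ : SpliceCl Sig (diffSet t s) Q) :
    R (mixOn (Q ∪ b) t s) * R (mixOn (Q ∪ c) t s) =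
      R (mixOn (Q ∪ b ∪ c) t s) * R (mixOn Q t s) := by
  obtain ⟨hXY, hXZ, hYZ, hcov⟩ := hP X Y Z hσ
  set D := diffSet t s with hD
  have hQD : ∀ v ∈ Q, v ∈ D := fun v hv => hQ.subsetD hv
  have hbD : ∀ v ∈ b, v ∈ D := fun v hv => hb.subsetD hv
  have hcD : ∀ v ∈ c, v ∈ D := fun v hv => hc.subsetD hv
  have hQb : SpliceCl Sig D (Q ∪ b) := hQ.union hP hb
  have hQc : SpliceCl Sig D (Q ∪ c) := hQ.union hP hc
  have hx : (Q ∪ b) ∩ (X ∩ D) = (Q ∪ c) ∩ (X ∩ D) := by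
    ext v
    simp only [Finset.mem_inter, Finset.mem_union]
    constructor
    · rintro ⟨h | h, hX⟩
      · exact ⟨Or.inl h, hX⟩
      · exact absurd hX.1 (hbX v h)
    · rintro ⟨h | h, hX⟩
      · exact ⟨Or.inl h, hX⟩
      · exact absurd hX.1 (hcX v h)
  have hexch := cube_exch hP hgood ht hs hσ hQb hQc hx
  have e1 : ((Q ∪ b) ∩ ((X ∪ Y) ∩ D)) ∪ ((Q ∪ c) ∩ (Z ∩ D)) = Q ∪ b ∪ c := by
    ext v
    simp only [Finset.mem_inter, Finset.mem_union]
    constructor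
    · rintro (⟨hq | hb', _⟩ | ⟨hq | hc', _⟩)
      · exact Or.inl (Or.inl hq)
      · exact Or.inl (Or.inr hb')
      · exact Or.inl (Or.inl hq)
      · exact Or.inr hc'
    · rintro ((hq | hb') | hc')
      · have hvD : v ∈ D := hQD v hq
        rcases mem_cover hcov v with h | h | h
        · exact Or.inl ⟨Or.inl hq, Or.inl h, hvD⟩
        · exact Or.inl ⟨Or.inl hq, Or.inr h, hvD⟩
        · exact Or.inr ⟨Or.inl hq, h, hvD⟩
      · exact Or.inl ⟨Or.inr hb', Or.inr (hbY hb'), hbD v hb'⟩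
      · exact Or.inr ⟨Or.inr hc', hcZ hc', hcD v hc'⟩
  have e2 : ((Q ∪ c) ∩ ((X ∪ Y) ∩ D)) ∪ ((Q ∪ b) ∩ (Z ∩ D)) = Q := by
    ext v
    simp only [Finset.mem_inter, Finset.mem_union]
    constructor
    · rintro (⟨hq | hc', hXY', _⟩ | ⟨hq | hb', hZ', _⟩)
      · exact hq
      · exfalso
        rcases hXY' with h | h
        · exact Finset.disjoint_left.mp hXZ h (hcZ hc')
        · exact Finset.disjoint_left.mp hYZ h (hcZ hc')
      · exact hq
      · exact absurd hZ' (Finset.disjoint_left.mp hYZ (hbY hb'))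
    · intro hq
      have hvD : v ∈ D := hQD v hq
      rcases mem_cover hcov v with h | h | h
      · exact Or.inl ⟨Or.inl hq, Or.inl h, hvD⟩
      · exact Or.inl ⟨Or.inl hq, Or.inr h, hvD⟩
      · exact Or.inr ⟨Or.inl hq, h, hvD⟩
  rwa [e1, e2] at hexch

lemma cube_square
    (hP : ∀ X Y Z : Finset V, Constraint.ci X Y Z ∈ Sig →
      Disjoint X Y ∧ Disjoint X Z ∧ Disjoint Y Z ∧ X ∪ Y ∪ Z = Finset.univ)
    (hgood : ∀ X Y Z : Finset V, Constraint.ci X Y Z ∈ Sig → goodCI R X Z)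
    (ht : R t ≠ 0) (hs : R s ≠ 0)
    {b c Q : Finset V} (hsep : Separated Sig b c)
    (hb : SpliceCl Sig (diffSet t s) b) (hc : SpliceCl Sig (diffSet t s) c)
    (hQ : SpliceCl Sig (diffSet t s) Q) :
    R (mixOn (Q ∪ b) t s) * R (mixOn (Q ∪ c) t s) =
      R (mixOn (Q ∪ b ∪ c) t s) * R (mixOn Q t s) := by
  obtain ⟨X, Y, Z, hσ, hX0, hor⟩ := hsep
  have hbX : ∀ v ∈ b, v ∉ X := by
    intro v hv hvX
    have : v ∈ (b ∪ c) ∩ X := Finset.mem_inter.mpr ⟨Finset.mem_union_left _ hv, hvX⟩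
    rw [hX0] at this
    exact Finset.notMem_empty v this
  have hcX : ∀ v ∈ c, v ∉ X := by
    intro v hv hvX
    have : v ∈ (b ∪ c) ∩ X := Finset.mem_inter.mpr ⟨Finset.mem_union_right _ hv, hvX⟩
    rw [hX0] at this
    exact Finset.notMem_empty v this
  rcases hor with ⟨hbY, hcZ⟩ | ⟨hbZ, hcY⟩
  · exact cube_square_aux hP hgood ht hs hσ hbX hcX hbY hcZ hb hc hQ
  · have h := cube_square_aux hP hgood ht hs hσ hcX hbX hcY hbZ hc hb hQ
    have e : Q ∪ c ∪ b = Q ∪ b ∪ c := by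
      ext v
      simp only [Finset.mem_union]
      tauto
    rw [e] at h
    rw [mul_comm]
    exact h

lemma cube_SQ
    (hP : ∀ X Y Z : Finset V, Constraint.ci X Y Z ∈ Sig →
      Disjoint X Y ∧ Disjoint X Z ∧ Disjoint Y Z ∧ X ∪ Y ∪ Z = Finset.univ)
    (hgood : ∀ X Y Z : Finset V, Constraint.ci X Y Z ∈ Sig → goodCI R X Z)
    (hnzd : noZD K) (hmc : mulCanc K)
    (ht : R t ≠ 0) (hs : R s ≠ 0) :
    ∀ n : ℕ, ∀ Q : Finset V, SpliceCl Sig (diffSet t s) Q → Q.card ≤ n →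
      ∀ d, d ∈ diffSet t s → Disjoint (blk Sig (diffSet t s) d) Q →
      R (mixOn (Q ∪ blk Sig (diffSet t s) d) t s) * R (mixOn ∅ t s) =
        R (mixOn Q t s) * R (mixOn (blk Sig (diffSet t s) d) t s) := by
  set D := diffSet t s with hDdef
  intro n
  induction n with
  | zero =>
      intro Q hQ hcard d hd _
      have hQ0 : Q = ∅ := Finset.card_eq_zero.mp (Nat.le_zero.mp hcard)
      subst hQ0
      rw [Finset.empty_union]
      exact mul_comm _ _
  | succ n ih =>
      intro Q hQ hcard d hd hdisj
      by_cases hQ0 : Q = ∅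
      · subst hQ0
        rw [Finset.empty_union]
        exact mul_comm _ _
      · obtain ⟨e, heQ⟩ := Finset.nonempty_iff_ne_empty.mpr hQ0
        have heD : e ∈ D := hQ.subsetD heQ
        set b := blk Sig D d with hbdef
        set c := blk Sig D e with hcdef
        have hcCl : SpliceCl Sig D c := SpliceCl.blk_mem hP heD
        have hbCl : SpliceCl Sig D b := SpliceCl.blk_mem hP hd
        have hcQ : c ⊆ Q := blk_subset_of_mem hQ heQ
        set Q' := Q \ c with hQ'def
        have hQ'Cl : SpliceCl Sig D Q' := hQ.sdiff hP hcCl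
        have heC : e ∈ c := self_mem_blk heD
        have hQ'card : Q'.card ≤ n := by
          have hss : Q' ⊂ Q := by
            refine Finset.ssubset_iff_of_subset Finset.sdiff_subset |>.mpr ?_
            exact ⟨e, heQ, fun h => (Finset.mem_sdiff.mp h).2 heC⟩
          exact Nat.lt_succ_iff.mp (lt_of_lt_of_le (Finset.card_lt_card hss) hcard)
        have hbQ' : Disjoint b Q' :=
          Finset.disjoint_of_subset_right Finset.sdiff_subset hdisj
        have hcQ' : Disjoint c Q' := (Finset.sdiff_disjoint).symm
        have henb : e ∉ b := fun h => (Finset.disjoint_left.mp hdisj h) heQ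
        have hsep : Separated Sig b c :=
          separation hP hbCl d e hd heD (self_mem_blk hd) henb
        have hsq := cube_square hP hgood ht hs hsep hbCl hcCl hQ'Cl
        have hih := ih Q' hQ'Cl hQ'card d hd hbQ'
        have hQeq : Q' ∪ c = Q := Finset.sdiff_union_of_subset hcQ
        have hQb : Q ∪ b = (Q' ∪ b) ∪ c := by
          rw [← hQeq]
          ext v
          simp only [Finset.mem_union]
          tauto
        rw [hQb, ← hQeq]
        -- abbreviations
        have hne1 : R (mixOn Q' t s) ≠ 0 := cube_supp hP hgood ht hs hQ'Cl
        have hne2 : R (mixOn (Q' ∪ b) t s) ≠ 0 :=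
          cube_supp hP hgood ht hs (hQ'Cl.union hP hbCl)
        apply cancel_right hmc (mul_ne_zero' hnzd hne1 hne2)
        calc (R (mixOn ((Q' ∪ b) ∪ c) t s) * R (mixOn ∅ t s)) *
              (R (mixOn Q' t s) * R (mixOn (Q' ∪ b) t s))
            = (R (mixOn ((Q' ∪ b) ∪ c) t s) * R (mixOn Q' t s)) *
              (R (mixOn ∅ t s) * R (mixOn (Q' ∪ b) t s)) := by ring
          _ = (R (mixOn (Q' ∪ b) t s) * R (mixOn (Q' ∪ c) t s)) *
              (R (mixOn ∅ t s) * R (mixOn (Q' ∪ b) t s)) := by rw [← hsq]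
          _ = (R (mixOn (Q' ∪ b) t s) * R (mixOn ∅ t s)) *
              (R (mixOn (Q' ∪ c) t s) * R (mixOn (Q' ∪ b) t s)) := by ring
          _ = (R (mixOn Q' t s) * R (mixOn b t s)) *
              (R (mixOn (Q' ∪ c) t s) * R (mixOn (Q' ∪ b) t s)) := by rw [hih]
          _ = (R (mixOn (Q' ∪ c) t s) * R (mixOn b t s)) *
              (R (mixOn Q' t s) * R (mixOn (Q' ∪ b) t s)) := by ring

lemma cube_ADD
    (hP : ∀ X Y Z : Finset V, Constraint.ci X Y Z ∈ Sig →
      Disjoint X Y ∧ Disjoint X Z ∧ Disjoint Y Z ∧ X ∪ Y ∪ Z = Finset.univ)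
    (hgood : ∀ X Y Z : Finset V, Constraint.ci X Y Z ∈ Sig → goodCI R X Z)
    (hnzd : noZD K) (hmc : mulCanc K)
    (ht : R t ≠ 0) (hs : R s ≠ 0) :
    ∀ n : ℕ, ∀ W : Finset V, SpliceCl Sig (diffSet t s) W → W.card ≤ n →
      ∀ U : Finset V, SpliceCl Sig (diffSet t s) U → Disjoint U W →
      R (mixOn (U ∪ W) t s) * R (mixOn ∅ t s) =
        R (mixOn U t s) * R (mixOn W t s) := by
  set D := diffSet t s with hDdef
  intro n
  induction n with
  | zero =>
      intro W hW hcard U hU _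
      have hW0 : W = ∅ := Finset.card_eq_zero.mp (Nat.le_zero.mp hcard)
      subst hW0
      rw [Finset.union_empty]
  | succ n ih =>
      intro W hW hcard U hU hdisj
      by_cases hW0 : W = ∅
      · subst hW0
        rw [Finset.union_empty]
      · obtain ⟨e, heW⟩ := Finset.nonempty_iff_ne_empty.mpr hW0
        have heD : e ∈ D := hW.subsetD heW
        set c := blk Sig D e with hcdef
        have hcCl : SpliceCl Sig D c := SpliceCl.blk_mem hP heD
        have hcW : c ⊆ W := blk_subset_of_mem hW heW
        set W' := W \ c with hW'def
        have hW'Cl : SpliceCl Sig D W' := hW.sdiff hP hcCl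
        have heC : e ∈ c := self_mem_blk heD
        have hW'card : W'.card ≤ n := by
          have hss : W' ⊂ W := by
            refine Finset.ssubset_iff_of_subset Finset.sdiff_subset |>.mpr ?_
            exact ⟨e, heW, fun h => (Finset.mem_sdiff.mp h).2 heC⟩
          exact Nat.lt_succ_iff.mp (lt_of_lt_of_le (Finset.card_lt_card hss) hcard)
        have hUW'Cl : SpliceCl Sig D (U ∪ W') := hU.union hP hW'Cl
        have hcUW' : Disjoint c (U ∪ W') := by
          rw [Finset.disjoint_union_right]
          constructor
          · exact (Finset.disjoint_of_subset_right hcW hdisj).symm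
          · exact (Finset.sdiff_disjoint).symm
        have hUW' : Disjoint U W' :=
          Finset.disjoint_of_subset_right Finset.sdiff_subset hdisj
        -- SQ applications
        have hα := cube_SQ hP hgood hnzd hmc ht hs (U ∪ W').card (U ∪ W') hUW'Cl
          le_rfl e heD hcUW'
        have hγ := cube_SQ hP hgood hnzd hmc ht hs W'.card W' hW'Cl le_rfl e heD
          (Finset.sdiff_disjoint).symm
        have hβ := ih W' hW'Cl hW'card U hU hUW'
        have hWeq : W' ∪ c = W := Finset.sdiff_union_of_subset hcW
        have hUWeq : (U ∪ W') ∪ c = U ∪ W := by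
          rw [Finset.union_assoc, hWeq]
        rw [← hUWeq, ← hWeq]
        have hne0 : R (mixOn ∅ t s) ≠ 0 := cube_supp hP hgood ht hs .base0
        have hneW' : R (mixOn W' t s) ≠ 0 := cube_supp hP hgood ht hs hW'Cl
        apply cancel_right hmc (mul_ne_zero' hnzd hne0 hneW')
        calc (R (mixOn ((U ∪ W') ∪ c) t s) * R (mixOn ∅ t s)) *
              (R (mixOn ∅ t s) * R (mixOn W' t s))
            = ((R (mixOn ((U ∪ W') ∪ c) t s) * R (mixOn ∅ t s)) * R (mixOn W' t s)) *
              R (mixOn ∅ t s) := by ring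
          _ = ((R (mixOn (U ∪ W') t s) * R (mixOn c t s)) * R (mixOn W' t s)) *
              R (mixOn ∅ t s) := by rw [hα]
          _ = ((R (mixOn (U ∪ W') t s) * R (mixOn ∅ t s)) * R (mixOn c t s)) *
              R (mixOn W' t s) := by ring
          _ = ((R (mixOn U t s) * R (mixOn W' t s)) * R (mixOn c t s)) *
              R (mixOn W' t s) := by rw [hβ]
          _ = (R (mixOn U t s) * (R (mixOn (W' ∪ c) t s) * R (mixOn ∅ t s))) *
              R (mixOn W' t s) := by rw [hγ]; ring
          _ = (R (mixOn U t s) * R (mixOn (W' ∪ c) t s)) *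
              (R (mixOn ∅ t s) * R (mixOn W' t s)) := by ring

end CubeRel

section Assembly
set_option linter.unusedSectionVars false
set_option maxHeartbeats 1600000

variable {Dom : V → Type*}

lemma b2_plusPos : plusPos B2 := by unfold plusPos; decide
lemma b2_noZD : noZD B2 := by unfold noZD; decide
lemma b2_mulCanc : mulCanc B2 := by unfold mulCanc; decide
lemma b2_vals : ∀ b : B2, b = 0 ∨ b = 1 := by decide

section Direct
variable [DecidableEq V] [Fintype V] [∀ a, Fintype (Dom a)]
variable {K : Type*} [CommSemiring K]

lemma satCI_to_good {R : Tup Dom (Finset.univ : Finset V) → K} {X Y Z : Finset V}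
    (hpos : plusPos K) (hnzd : noZD K) (hmc : mulCanc K)
    (hXY : Disjoint X Y) (hXZ : Disjoint X Z) (hYZ : Disjoint Y Z)
    (hcov : X ∪ Y ∪ Z = Finset.univ)
    (h : satCI R (Finset.subset_univ X) (Finset.subset_univ Y) (Finset.subset_univ Z)) :
    goodCI R X Z :=
  pointwise_to_good hpos hnzd hmc hXY hXZ hYZ hcov ((satCI_iff_pointwise hcov).mp h)

lemma good_to_satCI {R : Tup Dom (Finset.univ : Finset V) → K} {X Y Z : Finset V}
    (hXZ : Disjoint X Z) (hYZ : Disjoint Y Z) (hcov : X ∪ Y ∪ Z = Finset.univ)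
    (h : goodCI R X Z) :
    satCI R (Finset.subset_univ X) (Finset.subset_univ Y) (Finset.subset_univ Z) :=
  (satCI_iff_pointwise hcov).mpr (good_to_pointwise hXZ hYZ hcov h)

lemma goodCI_transfer {K' : Type*} [CommSemiring K']
    {R : Tup Dom (Finset.univ : Finset V) → K}
    {R' : Tup Dom (Finset.univ : Finset V) → K'} {X Z : Finset V}
    (hvals : ∀ w, R' w = 0 ∨ R' w = 1)
    (hsupp : ∀ w, R w ≠ 0 ↔ R' w ≠ 0)
    (h : goodCI R X Z) : goodCI R' X Z := by
  intro t s ht' hs' hag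
  have ht : R t ≠ 0 := (hsupp t).mpr ht'
  have hs : R s ≠ 0 := (hsupp s).mpr hs'
  have hbox := (h t s ht hs hag).1
  have hbox' := (h s t hs ht (fun v hv => (hag v hv).symm)).1
  refine ⟨(hsupp _).mp hbox, ?_⟩
  rw [(hvals t).resolve_left ht', (hvals s).resolve_left hs',
    (hvals _).resolve_left ((hsupp _).mp hbox), (hvals _).resolve_left ((hsupp _).mp hbox')]

lemma satFD_of_suppsub {K' : Type*} [CommSemiring K']
    {R : Tup Dom (Finset.univ : Finset V) → K}
    {R' : Tup Dom (Finset.univ : Finset V) → K'} {U W : Finset V}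
    (hsub : ∀ w, R' w ≠ 0 → R w ≠ 0)
    (h : satFD R (Finset.subset_univ U) (Finset.subset_univ W)) :
    satFD R' (Finset.subset_univ U) (Finset.subset_univ W) :=
  fun t t' h1 h2 he => h t t' (hsub _ h1) (hsub _ h2) he

lemma SatBy_transfer {K' : Type*} [CommSemiring K']
    (hpos : plusPos K) (hnzd : noZD K) (hmc : mulCanc K)
    {R : Tup Dom (Finset.univ : Finset V) → K}
    {R' : Tup Dom (Finset.univ : Finset V) → K'}
    (hvals : ∀ w, R' w = 0 ∨ R' w = 1)
    (hsupp : ∀ w, R w ≠ 0 ↔ R' w ≠ 0)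
    {σ : Constraint V} (hσ : σ.SCIorFD) (h : σ.SatBy R) : σ.SatBy R' := by
  cases σ with
  | ci X Y Z =>
      obtain ⟨hXY, hXZ, hYZ, hcov⟩ := hσ
      exact good_to_satCI hXZ hYZ hcov
        (goodCI_transfer hvals hsupp (satCI_to_good hpos hnzd hmc hXY hXZ hYZ hcov h))
  | fd U W =>
      exact satFD_of_suppsub (fun w hw => (hsupp w).mpr hw) h

end Direct

section Hard
variable [DecidableEq V] [Fintype V] [∀ a, Fintype (Dom a)]
variable {K : Type*} [CommSemiring K]

lemma mixOn_inter_diff (W : Finset V) (t s : Tup Dom (Finset.univ : Finset V)) :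
    mixOn W t s = mixOn (W ∩ diffSet t s) t s := by
  apply tup_ext
  intro v
  rw [ev_mixOn, ev_mixOn]
  by_cases hv : v ∈ W
  · by_cases hd : v ∈ diffSet t s
    · rw [if_pos hv, if_pos (Finset.mem_inter.mpr ⟨hv, hd⟩)]
    · rw [if_pos hv, if_neg (fun h => hd (Finset.mem_inter.mp h).2)]
      exact (eq_of_notMem_diffSet hd).symm
  · rw [if_neg hv, if_neg (fun h => hv (Finset.mem_inter.mp h).1)]

lemma mix_swap {t s : Tup Dom (Finset.univ : Finset V)} {X Y Z : Finset V}
    (hag : agreeOn X t s) (hYZ : Disjoint Y Z) (hcov : X ∪ Y ∪ Z = Finset.univ) :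
    mixOn Z s t = mixOn (Y ∩ diffSet t s) t s := by
  apply tup_ext
  intro v
  rw [ev_mixOn, ev_mixOn]
  by_cases hv : v ∈ Z
  · rw [if_pos hv, if_neg (fun h =>
      Finset.disjoint_left.mp hYZ (Finset.mem_inter.mp h).1 hv)]
  · rw [if_neg hv]
    by_cases h2 : v ∈ Y ∩ diffSet t s
    · rw [if_pos h2]
    · rw [if_neg h2]
      by_cases hd : v ∈ diffSet t s
      · rcases mem_cover hcov v with h | h | h
        · exact (hag v h).symm
        · exact absurd (Finset.mem_inter.mpr ⟨h, hd⟩) h2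
        · exact absurd h hv
      · exact (eq_of_notMem_diffSet hd).symm

lemma cube_agree_trace {t s : Tup Dom (Finset.univ : Finset V)} {X : Finset V}
    {A B : Finset V}
    (h : agreeOn X (mixOn A t s) (mixOn B t s)) :
    A ∩ (X ∩ diffSet t s) = B ∩ (X ∩ diffSet t s) := by
  ext v
  simp only [Finset.mem_inter]
  constructor
  · rintro ⟨hvA, hvX, hvD⟩
    refine ⟨?_, hvX, hvD⟩
    by_contra hvB
    have := h v hvX
    rw [ev_mixOn, ev_mixOn, if_pos hvA, if_neg hvB] at this
    exact mem_diffSet.mp hvD this.symm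
  · rintro ⟨hvB, hvX, hvD⟩
    refine ⟨?_, hvX, hvD⟩
    by_contra hvA
    have := h v hvX
    rw [ev_mixOn, ev_mixOn, if_neg hvA, if_pos hvB] at this
    exact mem_diffSet.mp hvD this

open Classical in
/-- The hard direction: Boolean implication yields the exchange/box condition for
the conclusion CI over any positive, multiplicatively cancellative semiring. -/
lemma hard_good {Sig : Set (Constraint V)} {τX τY τZ : Finset V}
    (hplus : plusPos K) (hnzd : noZD K) (hmc : mulCanc K)
    (hP : ∀ X Y Z : Finset V, Constraint.ci X Y Z ∈ Sig →
      Disjoint X Y ∧ Disjoint X Z ∧ Disjoint Y Z ∧ X ∪ Y ∪ Z = Finset.univ)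
    (hτXY : Disjoint τX τY) (hτXZ : Disjoint τX τZ) (hτYZ : Disjoint τY τZ)
    (hτcov : τX ∪ τY ∪ τZ = Finset.univ)
    {R : Tup Dom (Finset.univ : Finset V) → K}
    (hgood : ∀ X Y Z : Finset V, Constraint.ci X Y Z ∈ Sig → goodCI R X Z)
    (hfd : ∀ U W : Finset V, Constraint.fd U W ∈ Sig →
      satFD R (Finset.subset_univ U) (Finset.subset_univ W))
    (hB2 : impliesOver Dom B2 Sig (Constraint.ci τX τY τZ)) :
    goodCI R τX τZ := by
  intro t s ht hs hagX
  set D := diffSet t s with hDdef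
  set Rc : Tup Dom (Finset.univ : Finset V) → B2 := fun w =>
    if ∃ A : Finset V, SpliceCl Sig D A ∧ w = mixOn A t s then (1 : B2) else 0 with hRc
  have hone : (1 : B2) ≠ 0 := by decide
  have hmemc : ∀ w, Rc w ≠ 0 ↔ ∃ A : Finset V, SpliceCl Sig D A ∧ w = mixOn A t s := by
    intro w
    rw [hRc]
    by_cases h : ∃ A : Finset V, SpliceCl Sig D A ∧ w = mixOn A t s
    · simp only [if_pos h]
      exact ⟨fun _ => h, fun _ => hone⟩
    · simp only [if_neg h]
      exact ⟨fun h' => absurd rfl h', fun h' => absurd h' h⟩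
  have hsubsupp : ∀ w, Rc w ≠ 0 → R w ≠ 0 := by
    intro w hw
    obtain ⟨A, hA, rfl⟩ := (hmemc w).mp hw
    exact cube_supp hP hgood ht hs hA
  have hsatc : ∀ σ ∈ Sig, σ.SatBy Rc := by
    intro σ hσ
    cases σ with
    | ci X Y Z =>
        obtain ⟨hXY, hXZ, hYZ, hcov⟩ := hP X Y Z hσ
        apply good_to_satCI hXZ hYZ hcov
        intro t' s' h1 h2 hag
        obtain ⟨A, hA, rfl⟩ := (hmemc t').mp h1
        obtain ⟨B, hB, rfl⟩ := (hmemc s').mp h2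
        have htrace := cube_agree_trace hag
        have hmix : mixOn Z (mixOn A t s) (mixOn B t s) =
            mixOn ((A ∩ ((X ∪ Y) ∩ D)) ∪ (B ∩ (Z ∩ D))) t s :=
          cube_mix hXZ hYZ hcov A B
        have hmix' : mixOn Z (mixOn B t s) (mixOn A t s) =
            mixOn ((B ∩ ((X ∪ Y) ∩ D)) ∪ (A ∩ (Z ∩ D))) t s :=
          cube_mix hXZ hYZ hcov B A
        have hclP : SpliceCl Sig D ((A ∩ ((X ∪ Y) ∩ D)) ∪ (B ∩ (Z ∩ D))) :=
          .splice X Y Z A B hσ hA hB htrace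
        have hclP' : SpliceCl Sig D ((B ∩ ((X ∪ Y) ∩ D)) ∪ (A ∩ (Z ∩ D))) :=
          .splice X Y Z B A hσ hB hA htrace.symm
        constructor
        · rw [hmix]
          exact (hmemc _).mpr ⟨_, hclP, rfl⟩
        · have v1 : Rc (mixOn A t s) = 1 := (b2_vals _).resolve_left h1
          have v2 : Rc (mixOn B t s) = 1 := (b2_vals _).resolve_left h2
          have v3 : Rc (mixOn Z (mixOn A t s) (mixOn B t s)) = 1 := by
            rw [hmix]
            exact (b2_vals _).resolve_left ((hmemc _).mpr ⟨_, hclP, rfl⟩)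
          have v4 : Rc (mixOn Z (mixOn B t s) (mixOn A t s)) = 1 := by
            rw [hmix']
            exact (b2_vals _).resolve_left ((hmemc _).mpr ⟨_, hclP', rfl⟩)
          rw [v1, v2, v3, v4]
    | fd U W =>
        exact satFD_of_suppsub hsubsupp (hfd U W hσ)
  have hnec : ∃ w, Rc w ≠ 0 :=
    ⟨t, (hmemc t).mpr ⟨∅, .base0, (cube_empty t s).symm⟩⟩
  have hτc := hB2 Rc hnec hsatc
  have hgoodc : goodCI Rc τX τZ :=
    satCI_to_good b2_plusPos b2_noZD b2_mulCanc hτXY hτXZ hτYZ hτcov hτc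
  have htc : Rc t ≠ 0 := (hmemc t).mpr ⟨∅, .base0, (cube_empty t s).symm⟩
  have hsc : Rc s ≠ 0 := (hmemc s).mpr ⟨D, .base1, (cube_diff t s).symm⟩
  have hb1 := (hgoodc t s htc hsc hagX).1
  have hb2 := (hgoodc s t hsc htc (fun v hv => (hagX v hv).symm)).1
  -- extract the two splice-closure memberships
  have hmixZ : mixOn τZ t s = mixOn (τZ ∩ D) t s := mixOn_inter_diff τZ t s
  have hmixY : mixOn τZ s t = mixOn (τY ∩ D) t s := mix_swap hagX hτYZ hτcov
  have hClZ : SpliceCl Sig D (τZ ∩ D) := by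
    obtain ⟨A, hA, heq⟩ := (hmemc _).mp hb1
    rw [hmixZ] at heq
    have : A = τZ ∩ D := cube_inj hA.subsetD Finset.inter_subset_right heq.symm
    rwa [this] at hA
  have hClY : SpliceCl Sig D (τY ∩ D) := by
    obtain ⟨A, hA, heq⟩ := (hmemc _).mp hb2
    rw [hmixY] at heq
    have : A = τY ∩ D := cube_inj hA.subsetD Finset.inter_subset_right heq.symm
    rwa [this] at hA
  -- conclude via the telescoping identity
  have hdisjYZ : Disjoint (τZ ∩ D) (τY ∩ D) := by
    rw [Finset.disjoint_left]
    intro v hv hv'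
    exact Finset.disjoint_left.mp hτYZ (Finset.mem_inter.mp hv').1
      (Finset.mem_inter.mp hv).1
  have hDsplit : (τZ ∩ D) ∪ (τY ∩ D) = D := by
    ext v
    simp only [Finset.mem_union, Finset.mem_inter]
    constructor
    · rintro (⟨_, h⟩ | ⟨_, h⟩) <;> exact h
    · intro hvD
      rcases mem_cover hτcov v with h | h | h
      · exfalso
        exact mem_diffSet.mp hvD (hagX v h)
      · exact Or.inr ⟨h, hvD⟩
      · exact Or.inl ⟨h, hvD⟩
  have hADD := cube_ADD hP hgood hnzd hmc ht hs (τY ∩ D).card (τY ∩ D) hClY le_rfl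
    (τZ ∩ D) hClZ hdisjYZ
  rw [hDsplit, cube_diff, cube_empty, ← hmixZ, ← hmixY] at hADD
  constructor
  · rw [hmixZ]
    exact cube_supp hP hgood ht hs hClZ
  · rw [mul_comm (R s) (R t)] at hADD
    exact hADD

end Hard

section Main
variable [DecidableEq V] [Fintype V] [∀ a, Fintype (Dom a)]
variable {K : Type*} [CommSemiring K] [Nontrivial K]

open Classical in
lemma impliesOver_B2_to_K (hpos : posSemiring K) (hmc : mulCanc K)
    {Sig : Set (Constraint V)} {τ : Constraint V}
    (hSig : ∀ σ ∈ Sig, σ.SCIorFD) (hτ : τ.SCIorFD)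
    (hB2 : impliesOver Dom B2 Sig τ) : impliesOver Dom K Sig τ := by
  obtain ⟨hplus, hnzd⟩ := hpos
  intro R hne hsat
  have hP : ∀ X Y Z : Finset V, Constraint.ci X Y Z ∈ Sig →
      Disjoint X Y ∧ Disjoint X Z ∧ Disjoint Y Z ∧ X ∪ Y ∪ Z = Finset.univ :=
    fun X Y Z h => hSig _ h
  have hgood : ∀ X Y Z : Finset V, Constraint.ci X Y Z ∈ Sig → goodCI R X Z := by
    intro X Y Z h
    obtain ⟨hXY, hXZ, hYZ, hcov⟩ := hP X Y Z h
    exact satCI_to_good hplus hnzd hmc hXY hXZ hYZ hcov (hsat _ h)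
  have hfd : ∀ U W : Finset V, Constraint.fd U W ∈ Sig →
      satFD R (Finset.subset_univ U) (Finset.subset_univ W) :=
    fun U W h => hsat _ h
  cases τ with
  | ci X Y Z =>
      obtain ⟨hXY, hXZ, hYZ, hcov⟩ := hτ
      exact good_to_satCI hXZ hYZ hcov
        (hard_good hplus hnzd hmc hP hXY hXZ hYZ hcov hgood hfd hB2)
  | fd U W =>
      -- transfer the support to B2 and use the Boolean implication directly
      set Rb : Tup Dom (Finset.univ : Finset V) → B2 := fun w =>
        if R w = 0 then (0 : B2) else 1 with hRb
      have hone : (1 : B2) ≠ 0 := by decide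
      have hsupp : ∀ w, R w ≠ 0 ↔ Rb w ≠ 0 := by
        intro w
        rw [hRb]
        by_cases h : R w = 0
        · simp only [if_pos h]
          exact ⟨fun h' => absurd h h', fun h' => absurd rfl h'⟩
        · simp only [if_neg h]
          exact ⟨fun _ => hone, fun _ => h⟩
      have hvals : ∀ w, Rb w = 0 ∨ Rb w = 1 := fun w => b2_vals (Rb w)
      have hsatb : ∀ σ ∈ Sig, σ.SatBy Rb := fun σ hσ =>
        SatBy_transfer hplus hnzd hmc hvals hsupp (hSig σ hσ) (hsat σ hσ)
      obtain ⟨t0, ht0⟩ := hne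
      have hneb : ∃ w, Rb w ≠ 0 := ⟨t0, (hsupp t0).mp ht0⟩
      have hτb := hB2 Rb hneb hsatb
      exact satFD_of_suppsub (fun w hw => (hsupp w).mp hw) hτb

open Classical in
lemma impliesOver_K_to_B2 (hpos : posSemiring K) (hmc : mulCanc K)
    {Sig : Set (Constraint V)} {τ : Constraint V}
    (hSig : ∀ σ ∈ Sig, σ.SCIorFD) (hτ : τ.SCIorFD)
    (hK : impliesOver Dom K Sig τ) : impliesOver Dom B2 Sig τ := by
  obtain ⟨hplus, hnzd⟩ := hpos
  intro Rb hne hsatb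
  set Rk : Tup Dom (Finset.univ : Finset V) → K := fun w =>
    if Rb w = 0 then (0 : K) else 1 with hRk
  have hsupp : ∀ w, Rb w ≠ 0 ↔ Rk w ≠ 0 := by
    intro w
    rw [hRk]
    by_cases h : Rb w = 0
    · simp only [if_pos h]
      exact ⟨fun h' => absurd h h', fun h' => absurd rfl h'⟩
    · simp only [if_neg h]
      exact ⟨fun _ => one_ne_zero, fun _ => h⟩
  have hvals : ∀ w, Rk w = 0 ∨ Rk w = 1 := by
    intro w
    simp only [hRk]
    by_cases h : Rb w = 0
    · rw [if_pos h]; exact Or.inl rfl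
    · rw [if_neg h]; exact Or.inr rfl
  have hsat : ∀ σ ∈ Sig, σ.SatBy Rk := fun σ hσ =>
    SatBy_transfer b2_plusPos b2_noZD b2_mulCanc hvals hsupp (hSig σ hσ) (hsatb σ hσ)
  obtain ⟨t0, ht0⟩ := hne
  have hnek : ∃ w, Rk w ≠ 0 := ⟨t0, (hsupp t0).mp ht0⟩
  have hτk := hK Rk hnek hsat
  have hvalsb : ∀ w, Rb w = 0 ∨ Rb w = 1 := fun w => b2_vals (Rb w)
  have hsupp' : ∀ w, Rk w ≠ 0 ↔ Rb w ≠ 0 := fun w => (hsupp w).symm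
  exact SatBy_transfer hplus hnzd hmc hvalsb hsupp' hτ hτk

end Main
end Assembly
/-- Implication of saturated CIs and FDs does not depend on the choice of the
positive, multiplicatively cancellative semiring. -/
theorem sciFd_implication_semiring_independent
    [DecidableEq V] [Fintype V] (Dom : V → Type*)
    [∀ a, Fintype (Dom a)] [∀ a, Nonempty (Dom a)]
    (K K' : Type*) [CommSemiring K] [Nontrivial K] [CommSemiring K'] [Nontrivial K']
    (hposK : posSemiring K) (hmcK : mulCanc K)
    (hposK' : posSemiring K') (hmcK' : mulCanc K')
    (Sig : Set (Constraint V)) (τ : Constraint V)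
    (hSig : ∀ σ ∈ Sig, σ.SCIorFD) (hτ : τ.SCIorFD) :
    impliesOver Dom K Sig τ ↔ impliesOver Dom K' Sig τ := by
  constructor
  · intro h
    exact impliesOver_B2_to_K hposK' hmcK' hSig hτ
      (impliesOver_K_to_B2 hposK hmcK hSig hτ h)
  · intro h
    exact impliesOver_B2_to_K hposK hmcK hSig hτ
      (impliesOver_K_to_B2 hposK' hmcK' hSig hτ h)
end

section
/- Let K be a nontrivial commutative semiring whose addition is idempotent (a + a = a for all a ∈ K), let V be a finite schema of variables with finite nonempty domains, and let Σ ∪ {τ} be a set of conditional independence statements over V. If Σ implies τ over K-relations, then Σ implies τ over Boolean-semiring relations. -/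
/-! # Preliminaries: K-relations over semirings -/

open Finset

variable {V : Type*}

/-- A conditional independence statement `CI(X; Y, Z)`, given as a triple. -/
abbrev CITriple (V : Type*) := Finset V × Finset V × Finset V

/-- Satisfaction of a CI statement by a `K`-relation over the full schema `V`. -/
def CITriple.SatBy [DecidableEq V] [Fintype V] {Dom : V → Type*}
    [∀ a, Fintype (Dom a)] {K : Type*} [CommSemiring K]
    (σ : CITriple V) (R : Tup Dom (Finset.univ : Finset V) → K) : Prop :=
  satCI R (Finset.subset_univ σ.1) (Finset.subset_univ σ.2.1) (Finset.subset_univ σ.2.2)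

/-- The three components of a CI statement are pairwise disjoint. -/
def CITriple.PairwiseDisjoint {V : Type*} (σ : CITriple V) : Prop :=
  Disjoint σ.1 σ.2.1 ∧ Disjoint σ.1 σ.2.2 ∧ Disjoint σ.2.1 σ.2.2

/-- `Σ` implies `τ` over `K`-relations over the full schema `V`. -/
def impliesCIOver [DecidableEq V] [Fintype V] (Dom : V → Type*) [∀ a, Fintype (Dom a)]
    (K : Type*) [CommSemiring K] (Sig : Set (CITriple V)) (τ : CITriple V) : Prop :=
  ∀ R : Tup Dom (Finset.univ : Finset V) → K,
    (∀ σ ∈ Sig, CITriple.SatBy σ R) → CITriple.SatBy τ R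

/-- The canonical map from `B2` to any semiring. -/
def bmap (K : Type*) [CommSemiring K] : B2 → K :=
  fun b => Bool.rec (0 : K) (1 : K) b

theorem B2.cases_aux (a : B2) : a = 0 ∨ a = 1 :=
  Bool.rec (Or.inl rfl) (Or.inr rfl) a

theorem bmap_zero (K : Type*) [CommSemiring K] : bmap K 0 = 0 := rfl
theorem bmap_one (K : Type*) [CommSemiring K] : bmap K 1 = 1 := rfl

theorem bmap_add (K : Type*) [CommSemiring K] (hidem : ∀ a : K, a + a = a)
    (a b : B2) : bmap K (a + b) = bmap K a + bmap K b := by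
  rcases B2.cases_aux a with rfl | rfl <;> rcases B2.cases_aux b with rfl | rfl
  · show (0 : K) = 0 + 0; simp
  · show (1 : K) = 0 + 1; simp
  · show (1 : K) = 1 + 0; simp
  · show (1 : K) = 1 + 1; exact (hidem 1).symm

theorem bmap_mul (K : Type*) [CommSemiring K] (a b : B2) :
    bmap K (a * b) = bmap K a * bmap K b := by
  rcases B2.cases_aux a with rfl | rfl <;> rcases B2.cases_aux b with rfl | rfl
  · show (0 : K) = 0 * 0; simp
  · show (0 : K) = 0 * 1; simp
  · show (0 : K) = 1 * 0; simp
  · show (1 : K) = 1 * 1; simp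

theorem bmap_inj (K : Type*) [CommSemiring K] [Nontrivial K] {a b : B2}
    (hab : bmap K a = bmap K b) : a = b := by
  rcases B2.cases_aux a with rfl | rfl <;> rcases B2.cases_aux b with rfl | rfl
  · rfl
  · exact absurd hab.symm one_ne_zero
  · exact absurd hab one_ne_zero
  · rfl

/-- `bmap` bundled as an additive monoid hom (needs idempotency). -/
def bhom (K : Type*) [CommSemiring K] (hidem : ∀ a : K, a + a = a) : B2 →+ K where
  toFun := bmap K
  map_zero' := rfl
  map_add' := bmap_add K hidem

theorem bmap_margin {K : Type*} [CommSemiring K] [DecidableEq V]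
    (hidem : ∀ a : K, a + a = a)
    {Dom : V → Type*} [∀ a, Fintype (Dom a)] {X Y : Finset V}
    (R : Tup Dom X → B2) (h : Y ⊆ X) (u : Tup Dom Y) :
    bmap K (margin R h u) = margin (fun t => bmap K (R t)) h u := by
  classical
  unfold margin
  rw [show bmap K = bhom K hidem from rfl, map_sum]
  refine Finset.sum_congr rfl fun t _ => ?_
  by_cases ht : Tup.restrict h t = u <;> simp [ht, bhom, bmap_zero]

theorem satCI_transfer {K : Type*} [CommSemiring K] [Nontrivial K] [DecidableEq V]
    (hidem : ∀ a : K, a + a = a)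
    {Dom : V → Type*} [∀ a, Fintype (Dom a)] {S X Y Z : Finset V}
    (R : Tup Dom S → B2) (hX : X ⊆ S) (hY : Y ⊆ S) (hZ : Z ⊆ S) :
    satCI R hX hY hZ ↔ satCI (fun t => bmap K (R t)) hX hY hZ := by
  unfold satCI
  constructor
  · intro hR t
    rw [← bmap_margin hidem, ← bmap_margin hidem, ← bmap_margin hidem,
      ← bmap_margin hidem, ← bmap_mul, ← bmap_mul, hR t]
  · intro hR t
    apply bmap_inj K
    rw [bmap_mul, bmap_mul, bmap_margin hidem, bmap_margin hidem,
      bmap_margin hidem, bmap_margin hidem]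
    exact hR t

/-- If addition in `K` is idempotent, CI implication over `K`-relations entails
CI implication over Boolean-semiring relations. -/
theorem idempotentImplication_to_boolean
    [DecidableEq V] [Fintype V] (Dom : V → Type*)
    [∀ a, Fintype (Dom a)] [∀ a, Nonempty (Dom a)]
    (K : Type*) [CommSemiring K] [Nontrivial K]
    (hidem : ∀ a : K, a + a = a)
    (Sig : Set (CITriple V)) (τ : CITriple V)
    (hdisj : ∀ σ ∈ insert τ Sig, CITriple.PairwiseDisjoint σ)
    (h : impliesCIOver Dom K Sig τ) :
    impliesCIOver Dom B2 Sig τ := by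
  intro R hR
  have hτ : CITriple.SatBy τ (fun t => bmap K (R t)) := by
    apply h
    intro σ hσ
    exact (satCI_transfer hidem R _ _ _).mp (hR σ hσ)
  exact (satCI_transfer hidem R _ _ _).mpr hτ
end
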